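/- arXiv:2001.01070 — 5 statements merged into one kernel-verified Lean document; each statement's English description precedes it below -/
import Mathlib

section
/- Let f_1,…,f_n be step functions on [a,b) with A_k ≤ f_k(x) ≤ B_k for all x, where A_k < B_k. Then there exist step functions g_1,…,g_n on [a,b) such that each g_k takes only the values A_k and B_k, ∫_a^b ∏_{j∈S} g_j(x) dx = ∫_a^b ∏_{j∈S} f_j(x) dx for every nonempty subset S of {1,…,n}, and for every convex function Φ : ℝ → [0,∞) and all real coefficients a_1,…,a_n one has ∫_a^b Φ(∑_{k=1}^n a_k f_k(x)) dx ≤ ∫_a^b Φ(∑_{k=1}^n a_k g_k(x)) dx. -/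
open MeasureTheory

/-- `f` is a step function on `[a, b)`: on `[a, b)` it coincides with a finite linear
combination of indicator functions of subintervals `[α, β) ⊆ [a, b)`. -/

def IsStepOn (f : ℝ → ℝ) (a b : ℝ) : Prop :=
  ∃ (m : ℕ) (c α β : Fin m → ℝ),
    (∀ i, a ≤ α i ∧ β i ≤ b) ∧
    ∀ x ∈ Set.Ico a b,
      f x = ∑ i, c i * (Set.Ico (α i) (β i)).indicator (fun _ => (1 : ℝ)) x

lemma isStepOn_of_forms {f : ℝ → ℝ} {a b : ℝ} {ι : Type} [Fintype ι]
    (c α β : ι → ℝ) (hb : ∀ i, a ≤ α i ∧ β i ≤ b)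
    (h : ∀ x ∈ Set.Ico a b,
      f x = ∑ i, c i * (Set.Ico (α i) (β i)).indicator (fun _ => (1 : ℝ)) x) :
    IsStepOn f a b := by
  obtain ⟨e⟩ : Nonempty (ι ≃ Fin (Fintype.card ι)) := ⟨Fintype.equivFin ι⟩
  refine ⟨Fintype.card ι, c ∘ e.symm, α ∘ e.symm, β ∘ e.symm, fun i => hb _, fun x hx => ?_⟩
  rw [h x hx]
  exact Fintype.sum_equiv e (fun i => c i * (Set.Ico (α i) (β i)).indicator (fun _ => (1:ℝ)) x)
    (fun j => (c ∘ e.symm) j * (Set.Ico ((α ∘ e.symm) j) ((β ∘ e.symm) j)).indicator (fun _ => (1:ℝ)) x)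
    (fun i => by simp)

lemma stepForm_eq_zero {ι : Type} [Fintype ι] (c α β : ι → ℝ) {u v x : ℝ}
    (hb : ∀ i, u ≤ α i ∧ β i ≤ v) (hx : x ∉ Set.Ico u v) :
    ∑ i, c i * (Set.Ico (α i) (β i)).indicator (fun _ => (1 : ℝ)) x = 0 := by
  refine Finset.sum_eq_zero fun i _ => ?_
  rw [Set.indicator_of_notMem, mul_zero]
  intro hmem
  exact hx ⟨le_trans (hb i).1 hmem.1, lt_of_lt_of_le hmem.2 (hb i).2⟩

/-- Extract a globally-defined representative of a step function. -/
lemma IsStepOn.exists_rep {f : ℝ → ℝ} {u v : ℝ} (h : IsStepOn f u v) :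
    ∃ F : ℝ → ℝ, Measurable F ∧ (∀ x ∈ Set.Ico u v, F x = f x) ∧
      (∀ x, x ∉ Set.Ico u v → F x = 0) ∧ IsStepOn F u v := by
  obtain ⟨m, c, α, β, hb, hx⟩ := h
  refine ⟨fun x => ∑ i, c i * (Set.Ico (α i) (β i)).indicator (fun _ => (1 : ℝ)) x,
    ?_, fun x hxm => (hx x hxm).symm, fun x hxn => stepForm_eq_zero c α β hb hxn,
    m, c, α, β, hb, fun x hxm => rfl⟩
  exact Finset.measurable_sum _ fun i _ =>
    (measurable_const.indicator measurableSet_Ico).const_mul _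

lemma isStepOn_sum {a b : ℝ} {ι : Type} [Fintype ι] (F : ι → ℝ → ℝ) (u v : ι → ℝ)
    (hsub : ∀ i, a ≤ u i ∧ v i ≤ b) (hF : ∀ i, IsStepOn (F i) (u i) (v i))
    (hvan : ∀ i x, x ∉ Set.Ico (u i) (v i) → F i x = 0)
    {g : ℝ → ℝ} (hg : ∀ x ∈ Set.Ico a b, g x = ∑ i, F i x) : IsStepOn g a b := by
  choose m c α β hb hx using hF
  refine isStepOn_of_forms (ι := Σ i : ι, Fin (m i)) (fun p => c p.1 p.2)
    (fun p => α p.1 p.2) (fun p => β p.1 p.2)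
    (fun p => ⟨le_trans (hsub p.1).1 (hb p.1 p.2).1, le_trans (hb p.1 p.2).2 (hsub p.1).2⟩)
    (fun x hxm => ?_)
  rw [hg x hxm, ← Finset.univ_sigma_univ, Finset.sum_sigma]
  refine Finset.sum_congr rfl fun i _ => ?_
  by_cases hmem : x ∈ Set.Ico (u i) (v i)
  · exact hx i x hmem
  · rw [hvan i x hmem, stepForm_eq_zero _ _ _ (hb i) hmem]


lemma integrableOn_of_bdd {h : ℝ → ℝ} (hm : Measurable h) {C : ℝ}
    (hb : ∀ x, |h x| ≤ C) {s : Set ℝ} (hs : MeasurableSet s) (hfin : volume s ≠ ⊤) :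
    IntegrableOn h s := by
  haveI : Fact (volume s < ⊤) := ⟨hfin.lt_top⟩
  refine Integrable.mono' (integrable_const C) hm.aestronglyMeasurable.restrict ?_
  filter_upwards with x using hb x

lemma integrableOn_const' {c : ℝ} {s : Set ℝ} (hfin : volume s ≠ ⊤) :
    IntegrableOn (fun _ => c) s (volume : Measure ℝ) := by
  exact integrableOn_const hfin

lemma setIntegral_Ico_const (u v c : ℝ) (huv : u ≤ v) :
    ∫ x in Set.Ico u v, c = (v - u) * c := by
  rw [setIntegral_const, Real.volume_real_Ico_of_le huv, smul_eq_mul]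

lemma convexOn_shift {Φ : ℝ → ℝ} (hΦ : ConvexOn ℝ Set.univ Φ) (d : ℝ) :
    ConvexOn ℝ Set.univ (fun y => Φ (d + y)) := by
  refine ⟨convex_univ, fun x _ y _ p q hp hq hpq => ?_⟩
  have := hΦ.2 (Set.mem_univ (d + x)) (Set.mem_univ (d + y)) hp hq hpq
  simp only [smul_eq_mul] at this ⊢
  calc Φ (d + (p * x + q * y)) = Φ (p * (d + x) + q * (d + y)) := by
        rw [show p * (d + x) + q * (d + y) = (p + q) * d + (p * x + q * y) by ring, hpq, one_mul]
    _ ≤ p * Φ (d + x) + q * Φ (d + y) := this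

lemma phi_bound {Φ : ℝ → ℝ} (hΦc : Continuous Φ) (R : ℝ) :
    ∃ C, ∀ y : ℝ, |y| ≤ R → |Φ y| ≤ C := by
  obtain ⟨C, hC⟩ := (isCompact_Icc (a := -R) (b := R)).exists_bound_of_continuousOn
    hΦc.continuousOn
  exact ⟨C, fun y hy => hC y (abs_le.mp hy)⟩

lemma convexOn_continuous {Φ : ℝ → ℝ} (hΦ : ConvexOn ℝ Set.univ Φ) : Continuous Φ := by
  have := ConvexOn.continuousOn isOpen_univ hΦ
  exact continuousOn_univ.mp this

lemma pieceLemma : ∀ (n : ℕ) (A B t : Fin n → ℝ), (∀ k, A k < B k) →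
    (∀ k, A k ≤ t k ∧ t k ≤ B k) → ∀ u v : ℝ, u ≤ v →
    ∃ g : Fin n → ℝ → ℝ,
      (∀ k, Measurable (g k)) ∧
      (∀ k x, g k x = A k ∨ g k x = B k) ∧
      (∀ k, IsStepOn (g k) u v) ∧
      (∀ S : Finset (Fin n),
        (∫ x in Set.Ico u v, ∏ j ∈ S, g j x) = (v - u) * ∏ j ∈ S, t j) ∧
      (∀ Φ : ℝ → ℝ, ConvexOn ℝ Set.univ Φ → (∀ x, 0 ≤ Φ x) → ∀ c : Fin n → ℝ,
        (v - u) * Φ (∑ k, c k * t k) ≤ ∫ x in Set.Ico u v, Φ (∑ k, c k * g k x)) := by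
  intro n
  induction n with
  | zero =>
    intro A B t hAB ht u v huv
    refine ⟨fun k => Fin.elim0 k, fun k => k.elim0, fun k => k.elim0, fun k => k.elim0,
      fun S => ?_, fun Φ hΦ hΦ0 c => ?_⟩
    · have hS : S = ∅ := Finset.eq_empty_of_isEmpty S
      subst hS
      simp only [Finset.prod_empty]
      rw [setIntegral_Ico_const u v 1 huv]
    · simp only [Finset.univ_eq_empty, Finset.sum_empty]
      rw [setIntegral_Ico_const u v (Φ 0) huv]
  | succ n IH =>
    intro A B t hAB ht u v huv
    -- set up the split point
    set q : ℝ := (t 0 - A 0) / (B 0 - A 0) with hq_def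
    have hBA : (0:ℝ) < B 0 - A 0 := sub_pos.mpr (hAB 0)
    have hq0 : 0 ≤ q := div_nonneg (by linarith [(ht 0).1]) hBA.le
    have hq1 : q ≤ 1 := by
      rw [div_le_one hBA]; linarith [(ht 0).2]
    set mid : ℝ := u + q * (v - u) with hmid_def
    have hmu : mid - u = q * (v - u) := by simp [hmid_def]
    have hvm : v - mid = (1 - q) * (v - u) := by simp [hmid_def]; ring
    have hum : u ≤ mid := by nlinarith
    have hmv : mid ≤ v := by nlinarith
    have hqt : q * B 0 + (1 - q) * A 0 = t 0 := by
      have h := div_mul_cancel₀ (t 0 - A 0) hBA.ne'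
      rw [← hq_def] at h
      linear_combination h
    obtain ⟨g1, hg1m, hg1v, hg1s, hg1p, hg1j⟩ :=
      IH (A ∘ Fin.succ) (B ∘ Fin.succ) (t ∘ Fin.succ) (fun k => hAB k.succ)
        (fun k => ht k.succ) u mid hum
    obtain ⟨g2, hg2m, hg2v, hg2s, hg2p, hg2j⟩ :=
      IH (A ∘ Fin.succ) (B ∘ Fin.succ) (t ∘ Fin.succ) (fun k => hAB k.succ)
        (fun k => ht k.succ) mid v hmv
    set g : Fin (n+1) → ℝ → ℝ :=
      Fin.cons (fun x => if x < mid then B 0 else A 0)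
        (fun k x => if x < mid then g1 k x else g2 k x) with hg_def
    have hg0 : ∀ x, g 0 x = if x < mid then B 0 else A 0 := fun x => by
      simp [hg_def]
    have hgsucc : ∀ (k : Fin n) x, g k.succ x = if x < mid then g1 k x else g2 k x :=
      fun k x => by simp [hg_def]
    have hgm : ∀ k, Measurable (g k) := by
      intro k
      refine Fin.cases ?_ (fun k => ?_) k
      · simpa [hg_def] using Measurable.ite measurableSet_Iio
          (measurable_const : Measurable fun _ : ℝ => B 0) measurable_const
      · simpa [hg_def] using Measurable.ite measurableSet_Iio (hg1m k) (hg2m k)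
    have hgv : ∀ k x, g k x = A k ∨ g k x = B k := by
      intro k
      refine Fin.cases ?_ (fun k => ?_) k <;> intro x
      · rw [hg0]
        by_cases hxm : x < mid
        · rw [if_pos hxm]; exact Or.inr rfl
        · rw [if_neg hxm]; exact Or.inl rfl
      · rw [hgsucc]
        by_cases hxm : x < mid
        · rw [if_pos hxm]; exact hg1v k x
        · rw [if_neg hxm]; exact hg2v k x
    have hgs : ∀ k, IsStepOn (g k) u v := by
      intro k
      refine Fin.cases ?_ (fun k => ?_) k
      · refine isStepOn_of_forms (ι := Bool) (fun i => Bool.rec (A 0) (B 0) i)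
          (fun i => Bool.rec mid u i) (fun i => Bool.rec v mid i)
          (fun i => by cases i <;> exact ⟨by linarith, by linarith⟩) fun x hx => ?_
        rw [hg0, Fintype.sum_bool]
        have e1 : (Set.Ico u mid).indicator (fun _ => (1:ℝ)) x = if x < mid then 1 else 0 := by
          simp [Set.indicator_apply, Set.mem_Ico, hx.1]
        have e2 : (Set.Ico mid v).indicator (fun _ => (1:ℝ)) x = if x < mid then 0 else 1 := by
          simp only [Set.indicator_apply, Set.mem_Ico]
          by_cases hxm : x < mid
          · rw [if_neg (by intro hc; linarith [hc.1]), if_pos hxm]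
          · rw [if_pos ⟨not_lt.mp hxm, hx.2⟩, if_neg hxm]
        show (if x < mid then B 0 else A 0) =
          B 0 * (Set.Ico u mid).indicator (fun _ => (1:ℝ)) x +
          A 0 * (Set.Ico mid v).indicator (fun _ => (1:ℝ)) x
        rw [e1, e2]
        by_cases hxm : x < mid
        · rw [if_pos hxm, if_pos hxm, if_pos hxm]; ring
        · rw [if_neg hxm, if_neg hxm, if_neg hxm]; ring
      · obtain ⟨F1, hF1m, hF1eq, hF1van, hF1s⟩ := (hg1s k).exists_rep
        obtain ⟨F2, hF2m, hF2eq, hF2van, hF2s⟩ := (hg2s k).exists_rep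
        refine isStepOn_sum (ι := Bool) (fun i => Bool.rec F2 F1 i)
          (fun i => Bool.rec mid u i) (fun i => Bool.rec v mid i)
          (fun i => by cases i <;> exact ⟨by linarith, by linarith⟩)
          (fun i => by cases i <;> assumption)
          (fun i x hxi => by cases i; exacts [hF2van x hxi, hF1van x hxi])
          fun x hx => ?_
        rw [Fintype.sum_bool]
        show (if x < mid then g1 k x else g2 k x) = F1 x + F2 x
        by_cases hxm : x < mid
        · rw [if_pos hxm, hF1eq x ⟨hx.1, hxm⟩, hF2van x (fun hc => absurd hc.1 (not_le.mpr hxm)), add_zero]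
        · rw [if_neg hxm, hF2eq x ⟨not_lt.mp hxm, hx.2⟩, hF1van x (fun hc => hxm hc.2), zero_add]
    -- boundedness facts
    set M : Fin (n+1) → ℝ := fun j => max |A j| |B j| with hM_def
    have hgM : ∀ j x, |g j x| ≤ M j := by
      intro j x
      rcases hgv j x with h | h <;> rw [h]
      · exact le_max_left _ _
      · exact le_max_right _ _
    refine ⟨g, hgm, hgv, hgs, fun S => ?_, fun Φ hΦ hΦ0 c => ?_⟩
    · -- product integrals
      classical
      set S' : Finset (Fin n) := Finset.univ.filter (fun k => k.succ ∈ S) with hS'_def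
      have hsplit1 : ∀ x ∈ Set.Ico u mid,
          (∏ j ∈ S, g j x) = (if (0 : Fin (n+1)) ∈ S then B 0 else 1) * ∏ j ∈ S', g1 j x := by
        intro x hx
        have h1 : (∏ j ∈ S, g j x) = ∏ j : Fin (n+1), (if j ∈ S then g j x else 1) := by
          rw [Finset.prod_ite_mem, Finset.univ_inter]
        rw [h1, Fin.prod_univ_succ]
        congr 1
        · rw [hg0, if_pos hx.2]
        · rw [hS'_def, Finset.prod_filter]
          refine Finset.prod_congr rfl fun k _ => ?_
          rw [hgsucc, if_pos hx.2]
      have hsplit2 : ∀ x ∈ Set.Ico mid v,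
          (∏ j ∈ S, g j x) = (if (0 : Fin (n+1)) ∈ S then A 0 else 1) * ∏ j ∈ S', g2 j x := by
        intro x hx
        have h1 : (∏ j ∈ S, g j x) = ∏ j : Fin (n+1), (if j ∈ S then g j x else 1) := by
          rw [Finset.prod_ite_mem, Finset.univ_inter]
        rw [h1, Fin.prod_univ_succ]
        congr 1
        · rw [hg0, if_neg (not_lt.mpr hx.1)]
        · rw [hS'_def, Finset.prod_filter]
          refine Finset.prod_congr rfl fun k _ => ?_
          rw [hgsucc, if_neg (not_lt.mpr hx.1)]
      have hprodmeas : Measurable fun x => ∏ j ∈ S, g j x :=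
        Finset.measurable_prod S fun j _ => hgm j
      have hprodbd : ∀ x, |∏ j ∈ S, g j x| ≤ ∏ j ∈ S, M j := by
        intro x
        rw [Finset.abs_prod]
        exact Finset.prod_le_prod (fun _ _ => abs_nonneg _) (fun j _ => hgM j x)
      have hint : ∀ w z : ℝ, IntegrableOn (fun x => ∏ j ∈ S, g j x) (Set.Ico w z) :=
        fun w z => integrableOn_of_bdd hprodmeas hprodbd measurableSet_Ico
          (by rw [Real.volume_Ico]; exact ENNReal.ofReal_ne_top)
      rw [← Set.Ico_union_Ico_eq_Ico hum hmv,
        setIntegral_union (Set.Ico_disjoint_Ico_same) measurableSet_Ico (hint u mid) (hint mid v),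
        setIntegral_congr_fun measurableSet_Ico hsplit1,
        setIntegral_congr_fun measurableSet_Ico hsplit2,
        integral_const_mul, integral_const_mul, hg1p S', hg2p S']
      have hprodt : (∏ j ∈ S, t j) = (if (0 : Fin (n+1)) ∈ S then t 0 else 1) *
          ∏ j ∈ S', (t ∘ Fin.succ) j := by
        have h1 : (∏ j ∈ S, t j) = ∏ j : Fin (n+1), (if j ∈ S then t j else 1) := by
          rw [Finset.prod_ite_mem, Finset.univ_inter]
        rw [h1, Fin.prod_univ_succ, hS'_def, Finset.prod_filter]
        rfl
      rw [hprodt]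
      by_cases h0 : (0 : Fin (n+1)) ∈ S
      · simp only [if_pos h0]
        rw [hmu, hvm]
        linear_combination ((v - u) * ∏ j ∈ S', (t ∘ Fin.succ) j) * hqt
      · simp only [if_neg h0]
        rw [hmu, hvm]; ring
    · -- Jensen
      classical
      have hΦc : Continuous Φ := convexOn_continuous hΦ
      set R : ℝ := ∑ k, |c k| * M k with hR_def
      have hsumbd : ∀ x, |∑ k, c k * g k x| ≤ R := by
        intro x
        refine (Finset.abs_sum_le_sum_abs _ _).trans ?_
        rw [hR_def]
        refine Finset.sum_le_sum fun k _ => ?_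
        rw [abs_mul]
        exact mul_le_mul_of_nonneg_left (hgM k x) (abs_nonneg _)
      obtain ⟨C, hC⟩ := phi_bound hΦc R
      have hmeas : Measurable fun x => Φ (∑ k, c k * g k x) :=
        hΦc.measurable.comp (Finset.measurable_sum _ fun k _ => (hgm k).const_mul _)
      have hint : ∀ w z : ℝ, IntegrableOn (fun x => Φ (∑ k, c k * g k x)) (Set.Ico w z) :=
        fun w z => integrableOn_of_bdd hmeas (fun x => hC _ (hsumbd x)) measurableSet_Ico
          (by rw [Real.volume_Ico]; exact ENNReal.ofReal_ne_top)
      have hdecomp : ∀ x, (∑ k, c k * g k x) =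
          c 0 * g 0 x + ∑ k : Fin n, c k.succ * g k.succ x := fun x => Fin.sum_univ_succ _
      set s : ℝ := ∑ k : Fin n, c k.succ * (t ∘ Fin.succ) k with hs_def
      have hj1 : (mid - u) * Φ (c 0 * B 0 + s) ≤
          ∫ x in Set.Ico u mid, Φ (∑ k, c k * g k x) := by
        have h : (mid - u) * Φ (c 0 * B 0 + s) ≤
            ∫ x in Set.Ico u mid, Φ (c 0 * B 0 + ∑ k : Fin n, c k.succ * g1 k x) :=
          hg1j (fun y => Φ (c 0 * B 0 + y)) (convexOn_shift hΦ _) (fun y => hΦ0 _)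
            (fun k => c k.succ)
        refine h.trans_eq (setIntegral_congr_fun measurableSet_Ico fun x hx => ?_)
        rw [hdecomp, hg0, if_pos hx.2]
        congr 2
        refine Finset.sum_congr rfl fun k _ => ?_
        rw [hgsucc, if_pos hx.2]
      have hj2 : (v - mid) * Φ (c 0 * A 0 + s) ≤
          ∫ x in Set.Ico mid v, Φ (∑ k, c k * g k x) := by
        have h : (v - mid) * Φ (c 0 * A 0 + s) ≤
            ∫ x in Set.Ico mid v, Φ (c 0 * A 0 + ∑ k : Fin n, c k.succ * g2 k x) :=
          hg2j (fun y => Φ (c 0 * A 0 + y)) (convexOn_shift hΦ _) (fun y => hΦ0 _)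
            (fun k => c k.succ)
        refine h.trans_eq (setIntegral_congr_fun measurableSet_Ico fun x hx => ?_)
        rw [hdecomp, hg0, if_neg (not_lt.mpr hx.1)]
        congr 2
        refine Finset.sum_congr rfl fun k _ => ?_
        rw [hgsucc, if_neg (not_lt.mpr hx.1)]
      have hconv : Φ (c 0 * t 0 + s) ≤ q * Φ (c 0 * B 0 + s) + (1 - q) * Φ (c 0 * A 0 + s) := by
        have h2 := hΦ.2 (Set.mem_univ (c 0 * B 0 + s))
          (Set.mem_univ (c 0 * A 0 + s)) hq0 (show (0:ℝ) ≤ 1 - q by linarith)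
          (show q + (1 - q) = 1 by ring)
        simp only [smul_eq_mul] at h2
        calc Φ (c 0 * t 0 + s) = Φ (q * (c 0 * B 0 + s) + (1 - q) * (c 0 * A 0 + s)) := by
              rw [← hqt]; ring_nf
          _ ≤ _ := h2
      have hsum0 : (∑ k, c k * t k) = c 0 * t 0 + s := Fin.sum_univ_succ _
      rw [← Set.Ico_union_Ico_eq_Ico hum hmv,
        setIntegral_union (Set.Ico_disjoint_Ico_same) measurableSet_Ico (hint u mid) (hint mid v)]
      have key : (v - u) * Φ (∑ k, c k * t k) ≤
          (mid - u) * Φ (c 0 * B 0 + s) + (v - mid) * Φ (c 0 * A 0 + s) := by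
        rw [hsum0, hmu, hvm]
        nlinarith [hconv, sub_nonneg.mpr huv, hΦ0 (c 0 * t 0 + s)]
      linarith [hj1, hj2, key]

theorem stmt_9 (n : ℕ) (a b : ℝ) (hab : a < b)
    (A B : Fin n → ℝ) (hAB : ∀ k, A k < B k)
    (f : Fin n → ℝ → ℝ) (hf : ∀ k, IsStepOn (f k) a b)
    (hfb : ∀ k, ∀ x ∈ Set.Ico a b, A k ≤ f k x ∧ f k x ≤ B k) :
    ∃ g : Fin n → ℝ → ℝ,
      (∀ k, IsStepOn (g k) a b) ∧
      (∀ k, ∀ x ∈ Set.Ico a b, g k x = A k ∨ g k x = B k) ∧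
      (∀ S : Finset (Fin n), S.Nonempty →
        (∫ x in Set.Ico a b, ∏ j ∈ S, g j x) = ∫ x in Set.Ico a b, ∏ j ∈ S, f j x) ∧
      ∀ (Φ : ℝ → ℝ), ConvexOn ℝ Set.univ Φ → (∀ x, 0 ≤ Φ x) →
        ∀ c : Fin n → ℝ,
          (∫ x in Set.Ico a b, Φ (∑ k, c k * f k x)) ≤
            ∫ x in Set.Ico a b, Φ (∑ k, c k * g k x) := by
  classical
  choose m cc αα ββ hbnd hform using hf
  -- the finite set of all relevant endpoints
  set T : Finset ℝ := insert a (insert b (((Finset.univ : Finset (Fin n)).biUnion (fun k =>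
    (Finset.univ : Finset (Fin (m k))).biUnion (fun i => {αα k i, ββ k i}))).filter
      (fun x => a ≤ x ∧ x ≤ b))) with hT_def
  have haT : a ∈ T := Finset.mem_insert_self _ _
  have hbT : b ∈ T := Finset.mem_insert_of_mem (Finset.mem_insert_self _ _)
  have hTlb : ∀ x ∈ T, a ≤ x := by
    intro x hx
    rcases Finset.mem_insert.mp hx with h | h
    · exact h.ge
    rcases Finset.mem_insert.mp h with h | h
    · exact h ▸ hab.le
    · exact (Finset.mem_filter.mp h).2.1
  have hTub : ∀ x ∈ T, x ≤ b := by
    intro x hx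
    rcases Finset.mem_insert.mp hx with h | h
    · exact h.le.trans hab.le
    rcases Finset.mem_insert.mp h with h | h
    · exact h.le
    · exact (Finset.mem_filter.mp h).2.2
  have hαT : ∀ k i, αα k i ≤ b → αα k i ∈ T := by
    intro k i h
    refine Finset.mem_insert_of_mem (Finset.mem_insert_of_mem (Finset.mem_filter.mpr
      ⟨Finset.mem_biUnion.mpr ⟨k, Finset.mem_univ _, Finset.mem_biUnion.mpr
        ⟨i, Finset.mem_univ _, by simp⟩⟩, (hbnd k i).1, h⟩))
  have hβT : ∀ k i, a ≤ ββ k i → ββ k i ∈ T := by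
    intro k i h
    refine Finset.mem_insert_of_mem (Finset.mem_insert_of_mem (Finset.mem_filter.mpr
      ⟨Finset.mem_biUnion.mpr ⟨k, Finset.mem_univ _, Finset.mem_biUnion.mpr
        ⟨i, Finset.mem_univ _, by simp⟩⟩, h, (hbnd k i).2⟩))
  obtain ⟨M, hM⟩ : ∃ M, T.card = M + 1 :=
    ⟨T.card - 1, (Nat.succ_pred_eq_of_pos (Finset.card_pos.mpr ⟨a, haT⟩)).symm⟩
  set p : Fin (M + 1) → ℝ := fun i => (T.orderIsoOfFin hM i : ℝ) with hp_def
  have hpT : ∀ i, p i ∈ T := fun i => (T.orderIsoOfFin hM i).2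
  have hpsm : StrictMono p := fun i j h => by
    exact_mod_cast (T.orderIsoOfFin hM).lt_iff_lt.mpr h
  have hpmono : Monotone p := hpsm.monotone
  have hsurj : ∀ y ∈ T, ∃ j, p j = y := fun y hy =>
    ⟨(T.orderIsoOfFin hM).symm ⟨y, hy⟩,
      congrArg Subtype.val ((T.orderIsoOfFin hM).apply_symm_apply ⟨y, hy⟩)⟩
  have hp0 : p 0 = a := by
    obtain ⟨j, hj⟩ := hsurj a haT
    exact le_antisymm (hj ▸ hpmono (Fin.zero_le j)) (hTlb _ (hpT 0))
  have hplast : p (Fin.last M) = b := by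
    obtain ⟨j, hj⟩ := hsurj b hbT
    exact le_antisymm (hTub _ (hpT _)) (hj ▸ hpmono (Fin.le_last j))
  have hconsec : ∀ (i : Fin M) (y), y ∈ T → p i.castSucc < y → p i.succ ≤ y := by
    intro i y hy hlt
    obtain ⟨j, hj⟩ := hsurj y hy
    subst hj
    exact hpmono (Fin.castSucc_lt_iff_succ_le.mp (hpsm.lt_iff_lt.mp hlt))
  have hpiece_lt : ∀ i : Fin M, p i.castSucc < p i.succ :=
    fun i => hpsm (Fin.castSucc_lt_succ)
  have hpiece_sub : ∀ i : Fin M, Set.Ico (p i.castSucc) (p i.succ) ⊆ Set.Ico a b := by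
    intro i x hx
    exact ⟨le_trans (hp0 ▸ hpmono (Fin.zero_le _)) hx.1,
      lt_of_lt_of_le hx.2 (hplast ▸ hpmono (Fin.le_last _))⟩
  have hcover : ∀ x ∈ Set.Ico a b, ∃ i : Fin M, x ∈ Set.Ico (p i.castSucc) (p i.succ) := by
    intro x hx
    set J : Finset (Fin (M+1)) := Finset.univ.filter (fun j => p j ≤ x) with hJ_def
    have hJne : J.Nonempty := ⟨0, Finset.mem_filter.mpr ⟨Finset.mem_univ _, hp0 ▸ hx.1⟩⟩
    set j0 := J.max' hJne with hj0_def
    have hj0mem : p j0 ≤ x := (Finset.mem_filter.mp (J.max'_mem hJne)).2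
    have hj0lt : j0 < Fin.last M := by
      by_contra hcon
      have : j0 = Fin.last M := le_antisymm (Fin.le_last _) (not_lt.mp hcon)
      rw [this, hplast] at hj0mem
      exact absurd hx.2 (not_lt.mpr hj0mem)
    have hj0M : j0.val < M := hj0lt
    refine ⟨⟨j0.val, hj0M⟩, Set.mem_Ico.mpr ⟨?_, ?_⟩⟩
    · have hcast : (⟨j0.val, hj0M⟩ : Fin M).castSucc = j0 := Fin.ext rfl
      rw [hcast]; exact hj0mem
    · by_contra hcon
      have hsuccmem : (⟨j0.val, hj0M⟩ : Fin M).succ ∈ J :=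
        Finset.mem_filter.mpr ⟨Finset.mem_univ _, not_lt.mp hcon⟩
      have hle := J.le_max' _ hsuccmem
      rw [← hj0_def] at hle
      have : j0.val + 1 ≤ j0.val := hle
      omega
  -- pairwise disjointness of the pieces
  have hdisj : ∀ i i' : Fin M, i ≠ i' →
      Disjoint (Set.Ico (p i.castSucc) (p i.succ)) (Set.Ico (p i'.castSucc) (p i'.succ)) := by
    have key : ∀ i i' : Fin M, i < i' →
        Disjoint (Set.Ico (p i.castSucc) (p i.succ)) (Set.Ico (p i'.castSucc) (p i'.succ)) := by
      intro i i' hlt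
      rw [Set.disjoint_left]
      intro x hx hx'
      have h1 : p i.succ ≤ p i'.castSucc := hpmono (by
        rw [Fin.le_def]; rw [Fin.lt_def] at hlt; simp; omega)
      exact absurd (lt_of_lt_of_le hx.2 (h1.trans hx'.1)) (not_lt.mpr le_rfl)
    intro i i' hne
    rcases lt_or_gt_of_ne hne with h | h
    · exact key i i' h
    · exact (key i' i h).symm
  have hunion : Set.Ico a b = ⋃ i ∈ (Finset.univ : Finset (Fin M)),
      Set.Ico (p i.castSucc) (p i.succ) := by
    ext x
    simp only [Set.mem_iUnion, Finset.mem_univ, exists_prop, true_and]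
    constructor
    · exact fun hx => hcover x hx
    · rintro ⟨i, hi⟩; exact hpiece_sub i hi
  -- f is constant on each piece
  have hind : ∀ k (j : Fin (m k)) (i : Fin M), ∀ x ∈ Set.Ico (p i.castSucc) (p i.succ),
      (Set.Ico (αα k j) (ββ k j)).indicator (fun _ => (1:ℝ)) x =
      (Set.Ico (αα k j) (ββ k j)).indicator (fun _ => (1:ℝ)) (p i.castSucc) := by
    intro k j i x hx
    have hmem : x ∈ Set.Ico (αα k j) (ββ k j) ↔ p i.castSucc ∈ Set.Ico (αα k j) (ββ k j) := by
      constructor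
      · rintro ⟨h1, h2⟩
        have hαb : αα k j ≤ b := le_of_lt (lt_of_le_of_lt h1
          (lt_of_lt_of_le hx.2 (hTub _ (hpT _))))
        have hαmem : αα k j ∈ T := hαT k j hαb
        have hαle : αα k j ≤ p i.castSucc := by
          by_contra hcon
          have := hconsec i _ hαmem (not_le.mp hcon)
          exact absurd (lt_of_le_of_lt h1 hx.2) (not_lt.mpr this)
        exact ⟨hαle, lt_of_le_of_lt hx.1 h2⟩
      · rintro ⟨h1, h2⟩
        have hβmem : ββ k j ∈ T := hβT k j (le_trans (hTlb _ (hpT i.castSucc)) h2.le)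
        have hβge : p i.succ ≤ ββ k j := hconsec i _ hβmem h2
        exact ⟨le_trans h1 hx.1, lt_of_lt_of_le hx.2 hβge⟩
    by_cases hm : x ∈ Set.Ico (αα k j) (ββ k j)
    · rw [Set.indicator_of_mem hm, Set.indicator_of_mem (hmem.mp hm)]
    · rw [Set.indicator_of_notMem hm, Set.indicator_of_notMem (fun hc => hm (hmem.mpr hc))]
  have hpc_mem : ∀ i : Fin M, p i.castSucc ∈ Set.Ico a b := fun i =>
    hpiece_sub i ⟨le_rfl, hpiece_lt i⟩
  set tval : Fin n → Fin M → ℝ := fun k i => f k (p i.castSucc) with htval_def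
  have hconst : ∀ k (i : Fin M), ∀ x ∈ Set.Ico (p i.castSucc) (p i.succ),
      f k x = tval k i := by
    intro k i x hx
    show f k x = f k (p i.castSucc)
    rw [hform k x (hpiece_sub i hx), hform k (p i.castSucc) (hpc_mem i)]
    exact Finset.sum_congr rfl fun j _ => by rw [hind k j i x hx]
  have htb : ∀ k (i : Fin M), A k ≤ tval k i ∧ tval k i ≤ B k := fun k i =>
    hfb k _ (hpc_mem i)
  -- apply the piece lemma on each piece
  have hpl : ∀ i : Fin M, ∃ g : Fin n → ℝ → ℝ,
      (∀ k, Measurable (g k)) ∧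
      (∀ k x, g k x = A k ∨ g k x = B k) ∧
      (∀ k, IsStepOn (g k) (p i.castSucc) (p i.succ)) ∧
      (∀ S : Finset (Fin n),
        (∫ x in Set.Ico (p i.castSucc) (p i.succ), ∏ j ∈ S, g j x) =
          (p i.succ - p i.castSucc) * ∏ j ∈ S, tval j i) ∧
      (∀ Φ : ℝ → ℝ, ConvexOn ℝ Set.univ Φ → (∀ x, 0 ≤ Φ x) → ∀ c : Fin n → ℝ,
        (p i.succ - p i.castSucc) * Φ (∑ k, c k * tval k i) ≤
          ∫ x in Set.Ico (p i.castSucc) (p i.succ), Φ (∑ k, c k * g k x)) :=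
    fun i => pieceLemma n A B (fun k => tval k i) hAB (fun k => htb k i) _ _ (hpiece_lt i).le
  choose gP hgPm hgPv hgPs hgPp hgPj using hpl
  choose F hFm hFeq hFvan hFs using fun (i : Fin M) (k : Fin n) => (hgPs i k).exists_rep
  set g : Fin n → ℝ → ℝ := fun k x => ∑ i : Fin M, F i k x with hg_def
  have hgeq : ∀ (k) (i : Fin M), ∀ x ∈ Set.Ico (p i.castSucc) (p i.succ),
      g k x = gP i k x := by
    intro k i x hx
    show (∑ i' : Fin M, F i' k x) = gP i k x
    rw [Finset.sum_eq_single i (fun i' _ hne => hFvan i' k x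
      (fun hc => Set.disjoint_left.mp (hdisj i' i hne) hc hx))
      (fun h => absurd (Finset.mem_univ i) h)]
    exact hFeq i k x hx
  -- boundedness data
  set Mb : Fin n → ℝ := fun j => max |A j| |B j| with hMb_def
  have hgPM : ∀ (i : Fin M) j x, |gP i j x| ≤ Mb j := by
    intro i j x
    rcases hgPv i j x with h | h <;> rw [h]
    · exact le_max_left _ _
    · exact le_max_right _ _
  have hvolfin : ∀ u v : ℝ, volume (Set.Ico u v) ≠ ⊤ := fun u v => by
    rw [Real.volume_Ico]; exact ENNReal.ofReal_ne_top
  refine ⟨g, ?_, ?_, ?_, ?_⟩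
  · -- step functions
    intro k
    exact isStepOn_sum (fun i => F i k) (fun i => p i.castSucc) (fun i => p i.succ)
      (fun i => ⟨(hpc_mem i).1, (hplast ▸ hpmono (Fin.le_last _) : p i.succ ≤ b)⟩)
      (fun i => hFs i k) (fun i x hx => hFvan i k x hx) (fun x hx => rfl)
  · -- two-valued
    intro k x hx
    obtain ⟨i, hi⟩ := hcover x hx
    rw [hgeq k i x hi]
    exact hgPv i k x
  · -- product integrals
    intro S _
    have hintg : ∀ i : Fin M, IntegrableOn (fun x => ∏ j ∈ S, g j x)
        (Set.Ico (p i.castSucc) (p i.succ)) := by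
      intro i
      have hbase : IntegrableOn (fun x => ∏ j ∈ S, gP i j x)
          (Set.Ico (p i.castSucc) (p i.succ)) :=
        integrableOn_of_bdd (Finset.measurable_prod S fun j _ => hgPm i j)
          (fun x => by
            rw [Finset.abs_prod]
            exact Finset.prod_le_prod (fun _ _ => abs_nonneg _) (fun j _ => hgPM i j x))
          measurableSet_Ico (hvolfin _ _)
      exact hbase.congr_fun (fun x hx => (Finset.prod_congr rfl
        fun j _ => (hgeq j i x hx).symm)) measurableSet_Ico
    have hintf : ∀ i : Fin M, IntegrableOn (fun x => ∏ j ∈ S, f j x)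
        (Set.Ico (p i.castSucc) (p i.succ)) := by
      intro i
      exact (integrableOn_const' (c := ∏ j ∈ S, tval j i) (hvolfin _ _)).congr_fun
        (fun x hx => (Finset.prod_congr rfl fun j _ => (hconst j i x hx).symm))
        measurableSet_Ico
    rw [hunion, integral_biUnion_finset Finset.univ (fun i _ => measurableSet_Ico)
        (fun i _ i' _ hne => hdisj i i' hne) (fun i _ => hintg i),
      integral_biUnion_finset Finset.univ (fun i _ => measurableSet_Ico)
        (fun i _ i' _ hne => hdisj i i' hne) (fun i _ => hintf i)]
    refine Finset.sum_congr rfl fun i _ => ?_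
    rw [setIntegral_congr_fun measurableSet_Ico (fun x hx =>
      (Finset.prod_congr rfl fun j _ => hgeq j i x hx : (∏ j ∈ S, g j x) = ∏ j ∈ S, gP i j x)),
      hgPp i S,
      setIntegral_congr_fun measurableSet_Ico (fun x hx =>
      (Finset.prod_congr rfl fun j _ => hconst j i x hx : (∏ j ∈ S, f j x) = ∏ j ∈ S, tval j i)),
      setIntegral_Ico_const _ _ _ (hpiece_lt i).le]
  · -- Jensen
    intro Φ hΦ hΦ0 c
    have hΦc : Continuous Φ := convexOn_continuous hΦ
    set R : ℝ := ∑ k, |c k| * Mb k with hR_def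
    obtain ⟨C, hC⟩ := phi_bound hΦc R
    have hintg : ∀ i : Fin M, IntegrableOn (fun x => Φ (∑ k, c k * g k x))
        (Set.Ico (p i.castSucc) (p i.succ)) := by
      intro i
      have hbase : IntegrableOn (fun x => Φ (∑ k, c k * gP i k x))
          (Set.Ico (p i.castSucc) (p i.succ)) :=
        integrableOn_of_bdd
          (hΦc.measurable.comp (Finset.measurable_sum _ fun k _ => (hgPm i k).const_mul _))
          (fun x => hC _ ((Finset.abs_sum_le_sum_abs _ _).trans (Finset.sum_le_sum
            fun k _ => by
              rw [abs_mul]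
              exact mul_le_mul_of_nonneg_left (hgPM i k x) (abs_nonneg _))))
          measurableSet_Ico (hvolfin _ _)
      exact hbase.congr_fun (fun x hx => by
        beta_reduce
        congr 1
        exact Finset.sum_congr rfl fun k _ => by rw [hgeq k i x hx]) measurableSet_Ico
    have hintf : ∀ i : Fin M, IntegrableOn (fun x => Φ (∑ k, c k * f k x))
        (Set.Ico (p i.castSucc) (p i.succ)) := by
      intro i
      exact (integrableOn_const' (c := Φ (∑ k, c k * tval k i)) (hvolfin _ _)).congr_fun
        (fun x hx => by
          beta_reduce
          congr 1
          exact Finset.sum_congr rfl fun k _ => by rw [hconst k i x hx]) measurableSet_Ico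
    rw [hunion, integral_biUnion_finset Finset.univ (fun i _ => measurableSet_Ico)
        (fun i _ i' _ hne => hdisj i i' hne) (fun i _ => hintg i),
      integral_biUnion_finset Finset.univ (fun i _ => measurableSet_Ico)
        (fun i _ i' _ hne => hdisj i i' hne) (fun i _ => hintf i)]
    refine Finset.sum_le_sum fun i _ => ?_
    have h1 : (∫ x in Set.Ico (p i.castSucc) (p i.succ), Φ (∑ k, c k * f k x)) =
        (p i.succ - p i.castSucc) * Φ (∑ k, c k * tval k i) := by
      rw [setIntegral_congr_fun measurableSet_Ico (fun x hx => by
          show Φ (∑ k, c k * f k x) = Φ (∑ k, c k * tval k i)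
          congr 1
          exact Finset.sum_congr rfl fun k _ => by rw [hconst k i x hx]),
        setIntegral_Ico_const _ _ _ (hpiece_lt i).le]
    have h2 : (∫ x in Set.Ico (p i.castSucc) (p i.succ), Φ (∑ k, c k * g k x)) =
        ∫ x in Set.Ico (p i.castSucc) (p i.succ), Φ (∑ k, c k * gP i k x) :=
      setIntegral_congr_fun measurableSet_Ico (fun x hx => by
        show Φ (∑ k, c k * g k x) = Φ (∑ k, c k * gP i k x)
        congr 1
        exact Finset.sum_congr rfl fun k _ => by rw [hgeq k i x hx])
    rw [h1, h2]
    exact hgPj i Φ hΦ hΦ0 c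
end

section
/- Let l ≤ n be a positive integer and let g_1,…,g_n be random variables such that each g_k takes exactly two distinct nonzero values, each with positive probability, and such that the system g_1,…,g_n is 𝔐_l-multiplicative. Then g_1,…,g_n are 𝔐_l-independent, i.e., for every subset S of {1,…,n} with 1 ≤ |S| ≤ l, the random variables {g_j : j ∈ S} are mutually independent. -/
open MeasureTheory ProbabilityTheory

section Aux
variable {Ω : Type*} [MeasurableSpace Ω] {P : Measure Ω} [IsProbabilityMeasure P]
variable {n : ℕ} {g : Fin n → Ω → ℝ}

lemma aux_integrable (hgm : ∀ k, Measurable (g k)) {A B : Fin n → ℝ}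
    (hval : ∀ k, ∀ ω, g k ω = A k ∨ g k ω = B k)
    (U : Finset (Fin n)) : Integrable (fun ω => ∏ j ∈ U, g j ω) P := by
  refine (integrable_const (∏ j ∈ U, max |A j| |B j|)).mono'
    (Finset.measurable_prod U fun j _ => hgm j).aestronglyMeasurable
    (Filter.Eventually.of_forall fun ω => ?_)
  rw [Real.norm_eq_abs, Finset.abs_prod]
  refine Finset.prod_le_prod (fun j _ => abs_nonneg _) (fun j _ => ?_)
  rcases hval j ω with h | h
  · rw [h]; exact le_max_left _ _
  · rw [h]; exact le_max_right _ _

/-- expansion lemma -/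
lemma aux_expand (hgm : ∀ k, Measurable (g k)) {A B : Fin n → ℝ} {l : ℕ}
    (hval : ∀ k, ∀ ω, g k ω = A k ∨ g k ω = B k)
    (hmult : ∀ S : Finset (Fin n), S.Nonempty → S.card ≤ l →
      ∫ ω, ∏ j ∈ S, g j ω ∂P = 0)
    (T : Finset (Fin n)) (hT : T.card ≤ l) (w : Fin n → ℝ) :
    ∫ ω, ∏ j ∈ T, (g j ω - w j) ∂P = ∏ j ∈ T, (-(w j)) := by
  have hexp : ∀ ω, ∏ j ∈ T, (g j ω - w j)
      = ∑ U ∈ T.powerset, (∏ j ∈ U, g j ω) * ∏ j ∈ T \ U, (-(w j)) := by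
    intro ω
    simp only [sub_eq_add_neg]
    exact Finset.prod_add (fun j => g j ω) (fun j => -(w j)) T
  simp only [hexp]
  rw [integral_finset_sum]
  · rw [Finset.sum_eq_single_of_mem ∅ (Finset.empty_mem_powerset T)]
    · simp [integral_const]
    · intro U hU hUne
      have hUsub : U ⊆ T := Finset.mem_powerset.1 hU
      rw [integral_mul_const, hmult U (Finset.nonempty_of_ne_empty hUne)
        (le_trans (Finset.card_le_card hUsub) hT), zero_mul]
  · intro U _
    exact (aux_integrable hgm hval U).mul_const _

end Aux

section Aux2
variable {Ω : Type*} [MeasurableSpace Ω] {P : Measure Ω} [IsProbabilityMeasure P]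
variable {n : ℕ} {g : Fin n → Ω → ℝ}

lemma aux_measure (hgm : ∀ k, Measurable (g k)) {A B : Fin n → ℝ} {l : ℕ} (hl : 1 ≤ l)
    (hAB : ∀ k, A k ≠ B k)
    (hval : ∀ k, ∀ ω, g k ω = A k ∨ g k ω = B k)
    (hmult : ∀ S : Finset (Fin n), S.Nonempty → S.card ≤ l →
      ∫ ω, ∏ j ∈ S, g j ω ∂P = 0)
    (T : Finset (Fin n)) (hT : T.card ≤ l) (v w : Fin n → ℝ)
    (hvw : ∀ j ∈ T, (v j = A j ∧ w j = B j) ∨ (v j = B j ∧ w j = A j)) :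
    P (⋂ j ∈ T, {ω | g j ω = v j}) = ∏ j ∈ T, P {ω | g j ω = v j} := by
  have hne : ∀ j ∈ T, v j - w j ≠ 0 := by
    intro j hj
    rcases hvw j hj with ⟨h1, h2⟩ | ⟨h1, h2⟩ <;> rw [h1, h2, sub_ne_zero]
    · exact hAB j
    · exact (hAB j).symm
  have hind : ∀ j ∈ T, ∀ ω, Set.indicator {ω' | g j ω' = v j} (fun _ => (1:ℝ)) ω
      = (g j ω - w j) / (v j - w j) := by
    intro j hj ω
    by_cases h : g j ω = v j
    · rw [Set.indicator_of_mem (show ω ∈ {ω' | g j ω' = v j} from h), h, div_self (hne j hj)]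
    · have hw : g j ω = w j := by
        rcases hval j ω with hg | hg <;> rcases hvw j hj with ⟨h1, h2⟩ | ⟨h1, h2⟩ <;>
          simp_all
      rw [Set.indicator_of_notMem (show ω ∉ {ω' | g j ω' = v j} from h), hw, sub_self, zero_div]
  have hms : ∀ j, MeasurableSet {ω | g j ω = v j} := by
    intro j
    exact hgm j (measurableSet_singleton (v j))
  have hsing : ∀ j ∈ T, (P {ω | g j ω = v j}).toReal = -(w j) / (v j - w j) := by
    intro j hj
    have h1 : ∫ ω, Set.indicator {ω' | g j ω' = v j} (fun _ => (1:ℝ)) ω ∂P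
        = (P {ω | g j ω = v j}).toReal := by
      rw [integral_indicator_const (1:ℝ) (hms j), smul_eq_mul, mul_one]; rfl
    rw [← h1]
    have h2 : ∫ ω, Set.indicator {ω' | g j ω' = v j} (fun _ => (1:ℝ)) ω ∂P
        = ∫ ω, (g j ω - w j) / (v j - w j) ∂P := by
      exact integral_congr_ae (Filter.Eventually.of_forall fun ω => hind j hj ω)
    rw [h2]
    simp only [div_eq_mul_inv, integral_mul_const]
    have h3 : ∫ ω, (g j ω - w j) ∂P = -(w j) := by
      have := aux_expand (P := P) hgm hval hmult {j}
        (by simpa using hl) w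
      simpa using this
    rw [h3]
  -- key integral identity for the intersection
  have hkey : (P (⋂ j ∈ T, {ω | g j ω = v j})).toReal
      = ∏ j ∈ T, (P {ω | g j ω = v j}).toReal := by
    have hmeas : MeasurableSet (⋂ j ∈ T, {ω | g j ω = v j}) :=
      MeasurableSet.biInter T.countable_toSet (fun j _ => hms j)
    have h1 : ∫ ω, Set.indicator (⋂ j ∈ T, {ω' | g j ω' = v j}) (fun _ => (1:ℝ)) ω ∂P
        = (P (⋂ j ∈ T, {ω | g j ω = v j})).toReal := by
      rw [integral_indicator_const (1:ℝ) hmeas, smul_eq_mul, mul_one]; rfl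
    rw [← h1]
    have h2 : ∀ ω, Set.indicator (⋂ j ∈ T, {ω' | g j ω' = v j}) (fun _ => (1:ℝ)) ω
        = ∏ j ∈ T, (g j ω - w j) / (v j - w j) := by
      intro ω
      by_cases hω : ω ∈ ⋂ j ∈ T, {ω' | g j ω' = v j}
      · rw [Set.indicator_of_mem hω]
        have : ∀ j ∈ T, (g j ω - w j) / (v j - w j) = 1 := by
          intro j hj
          rw [← hind j hj ω, Set.indicator_of_mem]
          simp only [Set.mem_iInter] at hω
          exact hω j hj
        exact (Finset.prod_eq_one this).symm
      · rw [Set.indicator_of_notMem hω]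
        simp only [Set.mem_iInter, not_forall] at hω
        obtain ⟨j, hj, hωj⟩ := hω
        refine (Finset.prod_eq_zero hj ?_).symm
        rw [← hind j hj ω, Set.indicator_of_notMem hωj]
    rw [integral_congr_ae (Filter.Eventually.of_forall fun ω => h2 ω)]
    have h3 : ∀ ω, ∏ j ∈ T, (g j ω - w j) / (v j - w j)
        = (∏ j ∈ T, (g j ω - w j)) * (∏ j ∈ T, (v j - w j))⁻¹ := by
      intro ω
      rw [Finset.prod_div_distrib, div_eq_mul_inv]
    simp only [h3]
    rw [integral_mul_const, aux_expand (P := P) hgm hval hmult T hT w]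
    rw [← div_eq_mul_inv, ← Finset.prod_div_distrib]
    exact Finset.prod_congr rfl fun j hj => (hsing j hj).symm
  have hfin1 : P (⋂ j ∈ T, {ω | g j ω = v j}) ≠ ⊤ := measure_ne_top P _
  have hfin2 : (∏ j ∈ T, P {ω | g j ω = v j}) ≠ ⊤ := by
    refine (ENNReal.prod_lt_top fun j _ => ?_).ne
    exact measure_lt_top P _
  rw [← ENNReal.toReal_eq_toReal_iff' hfin1 hfin2, ENNReal.toReal_prod]
  exact hkey

end Aux2

theorem stmt_10 {Ω : Type*} [MeasurableSpace Ω] (P : Measure Ω) [IsProbabilityMeasure P]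
    (n l : ℕ) (hl : 1 ≤ l) (hln : l ≤ n)
    (g : Fin n → Ω → ℝ) (hgm : ∀ k, Measurable (g k))
    (A B : Fin n → ℝ) (hAB : ∀ k, A k ≠ B k) (hA0 : ∀ k, A k ≠ 0) (hB0 : ∀ k, B k ≠ 0)
    (hval : ∀ k, ∀ ω, g k ω = A k ∨ g k ω = B k)
    (hposA : ∀ k, 0 < P {ω | g k ω = A k}) (hposB : ∀ k, 0 < P {ω | g k ω = B k})
    (hmult : ∀ S : Finset (Fin n), S.Nonempty → S.card ≤ l →
      ∫ ω, ∏ j ∈ S, g j ω ∂P = 0) :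
    ∀ S : Finset (Fin n), S.Nonempty → S.card ≤ l →
      iIndepFun (fun j : S => g j) P := by
  classical
  intro S hSne hScard
  rw [iIndepFun_iff_measure_inter_preimage_eq_mul]
  intro F sets hsets
  by_cases hbad : ∃ j ∈ F, A (j : Fin n) ∉ sets j ∧ B (j : Fin n) ∉ sets j
  · obtain ⟨j, hjF, hA, hB⟩ := hbad
    have hempty : (fun ω => g (j : Fin n) ω) ⁻¹' sets j = ∅ := by
      ext ω
      simp only [Set.mem_preimage, Set.mem_empty_iff_false, iff_false]
      intro h
      rcases hval (j : Fin n) ω with hg | hg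
      · exact hA (hg ▸ h)
      · exact hB (hg ▸ h)
    rw [Finset.prod_eq_zero hjF (by rw [hempty]; exact measure_empty)]
    refine measure_mono_null ?_ measure_empty
    rw [← hempty]
    exact Set.biInter_subset_of_mem hjF
  · push_neg at hbad
    -- classify values
    set v : Fin n → ℝ := fun i =>
      if h : i ∈ S then (if A i ∈ sets ⟨i, h⟩ then A i else B i) else A i with hv
    set w : Fin n → ℝ := fun i =>
      if h : i ∈ S then (if A i ∈ sets ⟨i, h⟩ then B i else A i) else B i with hw
    set F' : Finset S := F.filter (fun j => ¬(A (j : Fin n) ∈ sets j ∧ B (j : Fin n) ∈ sets j))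
      with hF'
    have hpre1 : ∀ j ∈ F', (fun ω => g (j : Fin n) ω) ⁻¹' sets j
        = {ω | g (j : Fin n) ω = v (j : Fin n)} := by
      intro j hj
      have hjS : (j : Fin n) ∈ S := j.2
      have hnotboth : ¬(A (j : Fin n) ∈ sets j ∧ B (j : Fin n) ∈ sets j) :=
        (Finset.mem_filter.1 hj).2
      have hjF : j ∈ F := (Finset.mem_filter.1 hj).1
      have hone := hbad j hjF
      have hsj : sets ⟨(j : Fin n), hjS⟩ = sets j := by
        congr
      by_cases hc : A (j : Fin n) ∈ sets j
      · have hvA : v (j : Fin n) = A (j : Fin n) := by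
          rw [hv]; simp only [hjS, dif_pos, hsj]; rw [if_pos hc]
        have hBnot : B (j : Fin n) ∉ sets j := fun hB => hnotboth ⟨hc, hB⟩
        ext ω
        simp only [Set.mem_preimage, Set.mem_setOf_eq, hvA]
        constructor
        · intro h
          rcases hval (j : Fin n) ω with hg | hg
          · exact hg
          · exact absurd (hg ▸ h) hBnot
        · intro h; rw [h]; exact hc
      · have hBmem : B (j : Fin n) ∈ sets j := hone hc
        have hvB : v (j : Fin n) = B (j : Fin n) := by
          rw [hv]; simp only [hjS, dif_pos, hsj]; rw [if_neg hc]
        ext ω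
        simp only [Set.mem_preimage, Set.mem_setOf_eq, hvB]
        constructor
        · intro h
          rcases hval (j : Fin n) ω with hg | hg
          · exact absurd (hg ▸ h) hc
          · exact hg
        · intro h; rw [h]; exact hBmem
    have hpre2 : ∀ j ∈ F, j ∉ F' → (fun ω => g (j : Fin n) ω) ⁻¹' sets j = Set.univ := by
      intro j hjF hj
      have hboth : A (j : Fin n) ∈ sets j ∧ B (j : Fin n) ∈ sets j := by
        by_contra h
        exact hj (Finset.mem_filter.2 ⟨hjF, h⟩)
      ext ω
      simp only [Set.mem_preimage, Set.mem_univ, iff_true]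
      rcases hval (j : Fin n) ω with hg | hg
      · rw [hg]; exact hboth.1
      · rw [hg]; exact hboth.2
    -- the image finset in Fin n
    set T : Finset (Fin n) := F'.image (fun j : S => (j : Fin n)) with hT
    have hinj : Function.Injective (fun j : S => (j : Fin n)) := Subtype.val_injective
    have hTcard : T.card ≤ l := by
      rw [hT, Finset.card_image_of_injective _ hinj]
      calc F'.card ≤ Fintype.card S := Finset.card_le_univ F'
        _ = S.card := Fintype.card_coe S
        _ ≤ l := hScard
    have hvw : ∀ i ∈ T, (v i = A i ∧ w i = B i) ∨ (v i = B i ∧ w i = A i) := by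
      intro i hi
      obtain ⟨j, _, rfl⟩ := Finset.mem_image.1 hi
      have hjS : (j : Fin n) ∈ S := j.2
      rw [hv, hw]
      simp only [hjS, dif_pos]
      by_cases hc : A (j : Fin n) ∈ sets ⟨(j : Fin n), hjS⟩
      · left; rw [if_pos hc, if_pos hc]; exact ⟨rfl, rfl⟩
      · right; rw [if_neg hc, if_neg hc]; exact ⟨rfl, rfl⟩
    have hkey := aux_measure (P := P) hgm hl hAB hval hmult T hTcard v w hvw
    -- translate intersection
    have hint : (⋂ i ∈ F, (fun ω => g (i : Fin n) ω) ⁻¹' sets i)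
        = ⋂ i ∈ T, {ω | g i ω = v i} := by
      ext ω
      simp only [Set.mem_iInter, hT, Finset.mem_image]
      constructor
      · rintro h i ⟨j, hj, rfl⟩
        rw [← hpre1 j hj]
        exact h j (Finset.mem_filter.1 hj).1
      · intro h j hjF
        by_cases hj : j ∈ F'
        · rw [hpre1 j hj]
          exact h _ ⟨j, hj, rfl⟩
        · rw [hpre2 j hjF hj]
          trivial
    -- translate product
    have hprod : (∏ i ∈ F, P ((fun ω => g (i : Fin n) ω) ⁻¹' sets i))
        = ∏ i ∈ T, P {ω | g i ω = v i} := by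
      rw [hT, Finset.prod_image (fun j _ j' _ h => hinj h)]
      rw [← Finset.prod_filter_mul_prod_filter_not F
        (fun j => ¬(A (j : Fin n) ∈ sets j ∧ B (j : Fin n) ∈ sets j))]
      have h1 : ∏ j ∈ F.filter (fun j => ¬¬(A (j : Fin n) ∈ sets j ∧ B (j : Fin n) ∈ sets j)),
          P ((fun ω => g (j : Fin n) ω) ⁻¹' sets j) = 1 := by
        refine Finset.prod_eq_one fun j hj => ?_
        have hj' := Finset.mem_filter.1 hj
        have hnot : j ∉ F' := by
          rw [hF', Finset.mem_filter]
          push_neg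
          intro _
          exact not_not.1 hj'.2
        rw [hpre2 j hj'.1 hnot]
        exact measure_univ
      rw [h1, mul_one]
      refine Finset.prod_congr rfl fun j hj => ?_
      rw [hpre1 j hj]
    rw [hint, hprod]
    exact hkey
end

section
/- Every quasi-multiplicative sequence of random variables is sub-Gaussian: if (φ_k)_{k≥1} is a sequence of random variables with ‖φ_k‖_∞ ≤ 1 whose multiplicative error ∑_S |E[∏_{j∈S} φ_j]| over all finite nonempty subsets S of the positive integers is finite, then there exist constants c₁, c₂ > 0 such that E[exp(c₁ · (∑_{k=1}^n a_k φ_k)² / ∑_{k=1}^n a_k²)] ≤ c₂ for every n and all real coefficients a_1,…,a_n not all zero. -/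
open MeasureTheory Real

lemma helper_exp_le (t x : ℝ) (hx : |x| ≤ 1) :
    Real.exp (t * x) ≤ Real.sinh t * x + Real.cosh t := by
  obtain ⟨h1, h2⟩ := abs_le.1 hx
  have ha : (0:ℝ) ≤ (1+x)/2 := by linarith
  have hb : (0:ℝ) ≤ (1-x)/2 := by linarith
  have hab : (1+x)/2 + (1-x)/2 = 1 := by ring
  have := convexOn_exp.2 (Set.mem_univ t) (Set.mem_univ (-t)) ha hb hab
  simp only [smul_eq_mul] at this
  have harg : (1+x)/2 * t + (1-x)/2 * (-t) = t * x := by ring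
  rw [harg] at this
  rw [Real.sinh_eq, Real.cosh_eq]
  calc Real.exp (t*x) ≤ (1+x)/2 * Real.exp t + (1-x)/2 * Real.exp (-t) := this
    _ = (Real.exp t - Real.exp (-t))/2 * x + (Real.exp t + Real.exp (-t))/2 := by ring

lemma helper_abs_sinh (x : ℝ) : |Real.sinh x| ≤ Real.cosh x := by
  rw [abs_le, Real.sinh_eq, Real.cosh_eq]
  have := Real.exp_pos x
  have := Real.exp_pos (-x)
  constructor <;> nlinarith

lemma helper_mgf {Ω : Type*} [MeasurableSpace Ω] (P : Measure Ω) [IsProbabilityMeasure P]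
    (φ : ℕ → Ω → ℝ) (hφm : ∀ k, Measurable (φ k))
    (hb : ∀ᵐ ω ∂P, ∀ k, |φ k ω| ≤ 1)
    (hquasi : Summable (fun S : {S : Finset ℕ // S.Nonempty} =>
      |∫ ω, ∏ j ∈ S.1, φ j ω ∂P|))
    (n : ℕ) (a : Fin n → ℝ) (l : ℝ) :
    ∫ ω, Real.exp (l * ∑ k, a k * φ k ω) ∂P ≤
      (1 + ∑' S : {S : Finset ℕ // S.Nonempty}, |∫ ω, ∏ j ∈ S.1, φ j ω ∂P|) *
        Real.exp (l ^ 2 * (∑ k, (a k) ^ 2) / 2) := by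
  classical
  set μ0 : ℝ := ∑' S : {S : Finset ℕ // S.Nonempty}, |∫ ω, ∏ j ∈ S.1, φ j ω ∂P| with hμ0
  have hμ0nn : 0 ≤ μ0 := tsum_nonneg fun _ => abs_nonneg _
  set X : Ω → ℝ := fun ω => ∑ k, a k * φ k ω with hX
  have hXm : Measurable X := Finset.measurable_sum _ fun k _ => (hφm k).const_mul (a k)
  set T : Finset (Fin n) → Ω → ℝ := fun t ω =>
    (∏ i ∈ t, (Real.sinh (l * a i) * φ i ω)) * ∏ i ∈ Finset.univ \ t, Real.cosh (l * a i)
    with hT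
  set C : Finset (Fin n) → ℝ := fun t =>
    (∏ i ∈ t, Real.sinh (l * a i)) * ∏ i ∈ Finset.univ \ t, Real.cosh (l * a i) with hC
  set Q : Finset (Fin n) → ℝ := fun t => ∫ ω, ∏ i ∈ t, φ (i : ℕ) ω ∂P with hQ
  set g : Ω → ℝ := fun ω => ∏ k, (Real.sinh (l * a k) * φ k ω + Real.cosh (l * a k)) with hg
  -- measurability/integrability of T t
  have hTm : ∀ t : Finset (Fin n), Measurable (T t) := by
    intro t
    show Measurable fun ω => (∏ i ∈ t, Real.sinh (l * a i) * φ (i:ℕ) ω) *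
      ∏ i ∈ Finset.univ \ t, Real.cosh (l * a i)
    exact (Finset.measurable_prod _ fun (i : Fin n) _ => (hφm i).const_mul (Real.sinh (l * a i))).mul_const _
  have hTint : ∀ t : Finset (Fin n), Integrable (T t) P := by
    intro t
    refine Integrable.mono' (integrable_const
      ((∏ i ∈ t, |Real.sinh (l * a i)|) * ∏ i ∈ Finset.univ \ t, Real.cosh (l * a i)))
      (hTm t).aestronglyMeasurable ?_
    filter_upwards [hb] with ω hω
    rw [Real.norm_eq_abs, hT]
    simp only
    rw [abs_mul, Finset.abs_prod]
    have hcpos : 0 ≤ ∏ i ∈ Finset.univ \ t, Real.cosh (l * a i) :=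
      Finset.prod_nonneg fun i _ => (Real.cosh_pos _).le
    rw [abs_of_nonneg hcpos]
    apply mul_le_mul_of_nonneg_right _ hcpos
    apply Finset.prod_le_prod (fun i _ => abs_nonneg _)
    intro i _
    rw [abs_mul]
    calc |Real.sinh (l * a i)| * |φ i ω| ≤ |Real.sinh (l * a i)| * 1 :=
          mul_le_mul_of_nonneg_left (hω i) (abs_nonneg _)
      _ = |Real.sinh (l * a i)| := mul_one _
  -- integrability of g
  have hgm : Measurable g := Finset.measurable_prod _ fun i _ =>
    ((hφm i).const_mul (Real.sinh (l * a i))).add_const _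
  have hgint : Integrable g P := by
    refine Integrable.mono' (integrable_const
      (∏ k : Fin n, (|Real.sinh (l * a k)| + Real.cosh (l * a k))))
      hgm.aestronglyMeasurable ?_
    filter_upwards [hb] with ω hω
    rw [Real.norm_eq_abs, hg]
    simp only
    rw [Finset.abs_prod]
    apply Finset.prod_le_prod (fun i _ => abs_nonneg _)
    intro i _
    calc |Real.sinh (l * a i) * φ i ω + Real.cosh (l * a i)|
        ≤ |Real.sinh (l * a i) * φ i ω| + |Real.cosh (l * a i)| := abs_add_le _ _
      _ ≤ |Real.sinh (l * a i)| + Real.cosh (l * a i) := by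
          rw [abs_mul, abs_of_pos (Real.cosh_pos _)]
          have : |Real.sinh (l * a i)| * |φ i ω| ≤ |Real.sinh (l * a i)| * 1 :=
            mul_le_mul_of_nonneg_left (hω i) (abs_nonneg _)
          linarith
  -- integrability of exp (l * X)
  have hexpint : Integrable (fun ω => Real.exp (l * X ω)) P := by
    refine Integrable.mono' (integrable_const (Real.exp (|l| * ∑ k, |a k|)))
      (Real.measurable_exp.comp (hXm.const_mul l)).aestronglyMeasurable ?_
    filter_upwards [hb] with ω hω
    rw [Real.norm_eq_abs, abs_of_pos (Real.exp_pos _), Real.exp_le_exp]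
    calc l * X ω ≤ |l * X ω| := le_abs_self _
      _ = |l| * |X ω| := abs_mul _ _
      _ ≤ |l| * ∑ k, |a k| := by
          apply mul_le_mul_of_nonneg_left _ (abs_nonneg l)
          calc |X ω| ≤ ∑ k, |a k * φ k ω| := Finset.abs_sum_le_sum_abs _ _
            _ ≤ ∑ k, |a k| := by
                apply Finset.sum_le_sum
                intro i _
                rw [abs_mul]
                calc |a i| * |φ i ω| ≤ |a i| * 1 :=
                      mul_le_mul_of_nonneg_left (hω i) (abs_nonneg _)
                  _ = |a i| := mul_one _
  -- pointwise bound exp(l X) ≤ g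
  have hptw : ∀ᵐ ω ∂P, Real.exp (l * X ω) ≤ g ω := by
    filter_upwards [hb] with ω hω
    rw [hg, hX]
    simp only
    rw [Finset.mul_sum, Real.exp_sum]
    apply Finset.prod_le_prod (fun i _ => (Real.exp_pos _).le)
    intro i _
    have := helper_exp_le (l * a i) (φ i ω) (hω i)
    calc Real.exp (l * (a i * φ i ω)) = Real.exp ((l * a i) * φ i ω) := by ring_nf
      _ ≤ Real.sinh (l * a i) * φ i ω + Real.cosh (l * a i) := this
  -- step 1: ∫ exp ≤ ∫ g
  have step1 : ∫ ω, Real.exp (l * X ω) ∂P ≤ ∫ ω, g ω ∂P :=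
    integral_mono_ae hexpint hgint hptw
  -- step 2: ∫ g = ∑ over powerset
  have hg_expand : g = fun ω => ∑ t ∈ (Finset.univ : Finset (Fin n)).powerset, T t ω := by
    funext ω
    rw [hg]
    simp only
    exact Finset.prod_add _ _ _
  have step2 : ∫ ω, g ω ∂P = ∑ t ∈ (Finset.univ : Finset (Fin n)).powerset, C t * Q t := by
    rw [hg_expand, integral_finset_sum _ fun t _ => hTint t]
    apply Finset.sum_congr rfl
    intro t _
    have : T t = fun ω => C t * ∏ i ∈ t, φ (i : ℕ) ω := by
      funext ω
      rw [hT, hC]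
      simp only
      rw [Finset.prod_mul_distrib]
      ring
    rw [this]
    exact MeasureTheory.integral_const_mul _ _
  -- split the sum
  set ps := (Finset.univ : Finset (Fin n)).powerset with hps
  have hmem : ∅ ∈ ps := Finset.mem_powerset.2 (Finset.empty_subset _)
  have hsplit : ∑ t ∈ ps, C t * Q t = C ∅ * Q ∅ + ∑ t ∈ ps.erase ∅, C t * Q t :=
    (Finset.add_sum_erase ps _ hmem).symm
  have hQempty : Q ∅ = 1 := by simp [hQ]
  set K := ∏ i : Fin n, Real.cosh (l * a i) with hK
  have hCempty : C ∅ = K := by simp [hC, hK]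
  have hKpos : 0 < K := Finset.prod_pos fun i _ => Real.cosh_pos _
  -- bound each nonempty term
  have hCb : ∀ t : Finset (Fin n), |C t| ≤ K := by
    intro t
    rw [hC]
    simp only
    rw [abs_mul, Finset.abs_prod,
      abs_of_nonneg (Finset.prod_nonneg fun i _ => (Real.cosh_pos (l * a i)).le)]
    have h1 : ∏ i ∈ t, |Real.sinh (l * a i)| ≤ ∏ i ∈ t, Real.cosh (l * a i) :=
      Finset.prod_le_prod (fun i _ => abs_nonneg _) fun i _ => helper_abs_sinh _
    have h2 : (∏ i ∈ t, Real.cosh (l * a i)) * ∏ i ∈ Finset.univ \ t, Real.cosh (l * a i)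
        = K := by
      rw [mul_comm]
      exact Finset.prod_sdiff (Finset.subset_univ t)
    have h3 : 0 ≤ ∏ i ∈ Finset.univ \ t, Real.cosh (l * a i) :=
      Finset.prod_nonneg fun i _ => (Real.cosh_pos _).le
    calc (∏ i ∈ t, |Real.sinh (l * a i)|) * ∏ i ∈ Finset.univ \ t, Real.cosh (l * a i)
        ≤ (∏ i ∈ t, Real.cosh (l * a i)) * ∏ i ∈ Finset.univ \ t, Real.cosh (l * a i) :=
          mul_le_mul_of_nonneg_right h1 h3
      _ = K := h2
  have hterm : ∀ t ∈ ps.erase ∅, C t * Q t ≤ K * |Q t| := by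
    intro t _
    calc C t * Q t ≤ |C t * Q t| := le_abs_self _
      _ = |C t| * |Q t| := abs_mul _ _
      _ ≤ K * |Q t| := mul_le_mul_of_nonneg_right (hCb t) (abs_nonneg _)
  -- the quasi-multiplicative sum bound
  set F1 : Finset ℕ → ℝ :=
    Set.indicator {s : Finset ℕ | s.Nonempty} (fun s => |∫ ω, ∏ j ∈ s, φ j ω ∂P|) with hF1
  have hF1nn : ∀ s, 0 ≤ F1 s := fun s => Set.indicator_nonneg (fun _ _ => abs_nonneg _) s
  have hF1sum : Summable F1 := by
    rw [hF1, ← summable_subtype_iff_indicator]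
    exact hquasi
  have hμ0eq : μ0 = ∑' s, F1 s := by
    rw [hμ0, hF1]
    exact tsum_subtype {s : Finset ℕ | s.Nonempty} fun s => |∫ ω, ∏ j ∈ s, φ j ω ∂P|
  have hQsum : ∑ t ∈ ps.erase ∅, |Q t| ≤ μ0 := by
    have hinj : Function.Injective (Finset.image (Fin.val : Fin n → ℕ)) :=
      Finset.image_injective Fin.val_injective
    have heq : ∀ t ∈ ps.erase ∅, |Q t| = F1 (t.image Fin.val) := by
      intro t ht
      have htne : t.Nonempty := Finset.nonempty_of_ne_empty (Finset.ne_of_mem_erase ht)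
      have himg : (t.image Fin.val).Nonempty := htne.image _
      have hind : F1 (t.image Fin.val) = |∫ ω, ∏ j ∈ t.image Fin.val, φ j ω ∂P| :=
        Set.indicator_of_mem (by exact himg) _
      rw [hind, hQ]
      simp only
      congr 1
      apply integral_congr_ae
      filter_upwards with ω
      exact (Finset.prod_image (f := fun j => φ j ω) (s := t) (g := Fin.val)
        fun x _ y _ h => Fin.val_injective h).symm
    calc ∑ t ∈ ps.erase ∅, |Q t| = ∑ t ∈ ps.erase ∅, F1 (t.image Fin.val) :=
          Finset.sum_congr rfl heq
      _ = ∑ s ∈ (ps.erase ∅).image (Finset.image Fin.val), F1 s :=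
          (Finset.sum_image fun x _ y _ h => hinj h).symm
      _ ≤ ∑' s, F1 s := Summable.sum_le_tsum _ (fun s _ => hF1nn s) hF1sum
      _ = μ0 := hμ0eq.symm
  -- combine
  have hKexp : K ≤ Real.exp (l ^ 2 * (∑ k, (a k) ^ 2) / 2) := by
    calc K ≤ ∏ i : Fin n, Real.exp ((l * a i) ^ 2 / 2) :=
          Finset.prod_le_prod (fun i _ => (Real.cosh_pos _).le)
            fun i _ => Real.cosh_le_exp_half_sq _
      _ = Real.exp (∑ i : Fin n, (l * a i) ^ 2 / 2) := (Real.exp_sum _ _).symm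
      _ = Real.exp (l ^ 2 * (∑ k, (a k) ^ 2) / 2) := by
          congr 1
          rw [← Finset.sum_div, Finset.mul_sum]
          congr 1
          exact Finset.sum_congr rfl fun i _ => by ring
  have hfinal : ∑ t ∈ ps, C t * Q t ≤ K * (1 + μ0) := by
    rw [hsplit, hQempty, hCempty, mul_one]
    have h4 : ∑ t ∈ ps.erase ∅, C t * Q t ≤ K * μ0 := by
      calc ∑ t ∈ ps.erase ∅, C t * Q t ≤ ∑ t ∈ ps.erase ∅, K * |Q t| :=
            Finset.sum_le_sum hterm
        _ = K * ∑ t ∈ ps.erase ∅, |Q t| := (Finset.mul_sum _ _ _).symm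
        _ ≤ K * μ0 := mul_le_mul_of_nonneg_left hQsum hKpos.le
    linarith [hKpos]
  calc ∫ ω, Real.exp (l * X ω) ∂P ≤ ∫ ω, g ω ∂P := step1
    _ = ∑ t ∈ ps, C t * Q t := step2
    _ ≤ K * (1 + μ0) := hfinal
    _ ≤ Real.exp (l ^ 2 * (∑ k, (a k) ^ 2) / 2) * (1 + μ0) :=
        mul_le_mul_of_nonneg_right hKexp (by linarith)
    _ = (1 + μ0) * Real.exp (l ^ 2 * (∑ k, (a k) ^ 2) / 2) := mul_comm _ _

noncomputable def gseq (y : ℝ) (m : ℕ) : ℝ :=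
  Real.exp (((m : ℝ) + 1) ^ 2 / 8 - (m : ℝ) ^ 2) * (Real.exp (m * y) + Real.exp (-(m * y)))

lemma gseq_nonneg (y : ℝ) (m : ℕ) : 0 ≤ gseq y m := by
  unfold gseq; positivity

lemma helper_summable (y : ℝ) : Summable (gseq y) := by
  apply Summable.of_nonneg_of_le (gseq_nonneg y)
    (f := fun m : ℕ => (2 * Real.exp (2 * (|y| + 5/4) ^ 2 / 7 + 1/8)) * Real.exp (-1) ^ m)
  · intro m
    unfold gseq
    have hm : (0:ℝ) ≤ (m:ℝ) := Nat.cast_nonneg m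
    have hy : (0:ℝ) ≤ |y| := abs_nonneg y
    have h1 : Real.exp (m * y) + Real.exp (-(m * y)) ≤ 2 * Real.exp (m * |y|) := by
      have ha : (m:ℝ) * y ≤ m * |y| := mul_le_mul_of_nonneg_left (le_abs_self y) hm
      have hb : -((m:ℝ) * y) ≤ m * |y| := by
        have : -y ≤ |y| := neg_le_abs y
        nlinarith
      have := Real.exp_le_exp.2 ha
      have := Real.exp_le_exp.2 hb
      linarith
    have h2 : Real.exp (((m:ℝ)+1)^2/8 - (m:ℝ)^2) * (2 * Real.exp (m * |y|))
        = 2 * Real.exp (((m:ℝ)+1)^2/8 - (m:ℝ)^2 + m * |y|) := by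
      rw [Real.exp_add]; ring
    have h3 : ((m:ℝ)+1)^2/8 - (m:ℝ)^2 + m * |y| ≤ 2 * (|y| + 5/4)^2/7 + 1/8 + m * (-1) := by
      nlinarith [sq_nonneg ((m:ℝ) - 4 * (|y| + 5/4) / 7)]
    have h4 : Real.exp (((m:ℝ)+1)^2/8 - (m:ℝ)^2 + m * |y|)
        ≤ Real.exp (2 * (|y| + 5/4)^2/7 + 1/8) * Real.exp (-1) ^ m := by
      rw [← Real.exp_nat_mul, ← Real.exp_add]
      exact Real.exp_le_exp.2 h3
    calc Real.exp (((m:ℝ)+1)^2/8 - (m:ℝ)^2) * (Real.exp (m * y) + Real.exp (-(m * y)))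
        ≤ Real.exp (((m:ℝ)+1)^2/8 - (m:ℝ)^2) * (2 * Real.exp (m * |y|)) :=
          mul_le_mul_of_nonneg_left h1 (Real.exp_nonneg _)
      _ = 2 * Real.exp (((m:ℝ)+1)^2/8 - (m:ℝ)^2 + m * |y|) := h2
      _ ≤ 2 * (Real.exp (2 * (|y| + 5/4)^2/7 + 1/8) * Real.exp (-1) ^ m) := by
          have := mul_le_mul_of_nonneg_left h4 (by norm_num : (0:ℝ) ≤ 2)
          linarith
      _ = (2 * Real.exp (2 * (|y| + 5/4)^2/7 + 1/8)) * Real.exp (-1) ^ m := by ring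
  · exact Summable.mul_left _ (summable_geometric_of_lt_one (Real.exp_nonneg _)
      (Real.exp_lt_one_iff.2 (by norm_num)))

lemma helper_ptwise (y : ℝ) : Real.exp (y ^ 2 / 8) ≤ ∑' m : ℕ, gseq y m := by
  set m0 := ⌊|y|⌋₊ with hm0
  have h1 : |y| < (m0 : ℝ) + 1 := Nat.lt_floor_add_one _
  have h2 : (m0 : ℝ) ≤ |y| := Nat.floor_le (abs_nonneg y)
  have hkey : Real.exp (y ^ 2 / 8) ≤ gseq y m0 := by
    unfold gseq
    have ha : Real.exp ((m0:ℝ) * |y|) ≤ Real.exp (m0 * y) + Real.exp (-(m0 * y)) := by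
      rcases abs_cases y with ⟨h, _⟩ | ⟨h, _⟩
      · rw [h]; linarith [Real.exp_pos (-((m0:ℝ) * y))]
      · rw [h]
        have : (m0:ℝ) * -y = -((m0:ℝ)*y) := by ring
        rw [this]; linarith [Real.exp_pos ((m0:ℝ) * y)]
    have hb : Real.exp ((m0:ℝ)^2) ≤ Real.exp ((m0:ℝ) * |y|) :=
      Real.exp_le_exp.2 (by nlinarith)
    have hc : Real.exp (y^2/8) ≤ Real.exp (((m0:ℝ)+1)^2/8) := by
      apply Real.exp_le_exp.2
      have : y^2 = |y|^2 := (sq_abs y).symm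
      nlinarith [abs_nonneg y]
    calc Real.exp (y^2/8) ≤ Real.exp (((m0:ℝ)+1)^2/8) := hc
      _ = Real.exp (((m0:ℝ)+1)^2/8 - (m0:ℝ)^2) * Real.exp ((m0:ℝ)^2) := by
          rw [← Real.exp_add]; ring_nf
      _ ≤ Real.exp (((m0:ℝ)+1)^2/8 - (m0:ℝ)^2) * (Real.exp (m0 * y) + Real.exp (-(m0 * y))) := by
          apply mul_le_mul_of_nonneg_left _ (Real.exp_nonneg _)
          exact le_trans hb ha
  exact le_trans hkey (Summable.le_tsum (helper_summable y) m0 fun m _ => gseq_nonneg y m)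

lemma helper_expint {Ω : Type*} [MeasurableSpace Ω] (P : Measure Ω) [IsProbabilityMeasure P]
    (φ : ℕ → Ω → ℝ) (hφm : ∀ k, Measurable (φ k))
    (hb : ∀ᵐ ω ∂P, ∀ k, |φ k ω| ≤ 1) (n : ℕ) (a : Fin n → ℝ) (l : ℝ) :
    Integrable (fun ω => Real.exp (l * ∑ k, a k * φ k ω)) P := by
  have hXm : Measurable (fun ω => ∑ k, a k * φ k ω : Ω → ℝ) :=
    Finset.measurable_sum _ fun (k : Fin n) _ => (hφm k).const_mul (a k)
  refine Integrable.mono' (integrable_const (Real.exp (|l| * ∑ k, |a k|)))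
    (Real.measurable_exp.comp (hXm.const_mul l)).aestronglyMeasurable ?_
  filter_upwards [hb] with ω hω
  rw [Real.norm_eq_abs, abs_of_pos (Real.exp_pos _), Real.exp_le_exp]
  calc l * ∑ k, a k * φ k ω ≤ |l * ∑ k, a k * φ k ω| := le_abs_self _
    _ = |l| * |∑ k, a k * φ k ω| := abs_mul _ _
    _ ≤ |l| * ∑ k, |a k| := by
        apply mul_le_mul_of_nonneg_left _ (abs_nonneg l)
        calc |∑ k, a k * φ k ω| ≤ ∑ k, |a k * φ k ω| := Finset.abs_sum_le_sum_abs _ _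
          _ ≤ ∑ k, |a k| := by
              apply Finset.sum_le_sum
              intro i _
              rw [abs_mul]
              calc |a i| * |φ i ω| ≤ |a i| * 1 :=
                    mul_le_mul_of_nonneg_left (hω i) (abs_nonneg _)
                _ = |a i| := mul_one _
set_option maxHeartbeats 1000000 in
theorem stmt_11 {Ω : Type*} [MeasurableSpace Ω] (P : Measure Ω) [IsProbabilityMeasure P]
    (φ : ℕ → Ω → ℝ) (hφm : ∀ k, Measurable (φ k))
    (hφb : ∀ k, ∀ᵐ ω ∂P, |φ k ω| ≤ 1)
    (hquasi : Summable (fun S : {S : Finset ℕ // S.Nonempty} =>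
      |∫ ω, ∏ j ∈ S.1, φ j ω ∂P|)) :
    ∃ c₁ c₂ : ℝ, 0 < c₁ ∧ 0 < c₂ ∧
      ∀ (n : ℕ) (a : Fin n → ℝ), a ≠ 0 →
        ∫ ω, Real.exp (c₁ * (∑ k, a k * φ k ω) ^ 2 / ∑ k, (a k) ^ 2) ∂P ≤ c₂ := by
  classical
  have hb : ∀ᵐ ω ∂P, ∀ k, |φ k ω| ≤ 1 := ae_all_iff.2 hφb
  set μ0 : ℝ := ∑' S : {S : Finset ℕ // S.Nonempty}, |∫ ω, ∏ j ∈ S.1, φ j ω ∂P| with hμ0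
  have hμ0nn : 0 ≤ μ0 := tsum_nonneg fun _ => abs_nonneg _
  have hr1 : Real.exp (-(1/8) : ℝ) < 1 := Real.exp_lt_one_iff.2 (by norm_num)
  have hrnn : (0:ℝ) ≤ Real.exp (-(1/8) : ℝ) := Real.exp_nonneg _
  set c₂ : ℝ := 2 * (1 + μ0) * Real.exp (1/8) * (1 - Real.exp (-(1/8)))⁻¹ with hc₂
  have hc₂pos : 0 < c₂ := by
    apply mul_pos (mul_pos (by linarith) (Real.exp_pos _)) (inv_pos.2 (by linarith))
  refine ⟨1/8, c₂, by norm_num, hc₂pos, ?_⟩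
  intro n a ha
  set S : ℝ := ∑ k, (a k) ^ 2 with hS
  have hSpos : 0 < S := by
    have hex : ∃ k, a k ≠ 0 := by
      by_contra h
      push_neg at h
      exact ha (funext h)
    obtain ⟨k, hk⟩ := hex
    exact Finset.sum_pos' (fun i _ => sq_nonneg _) ⟨k, Finset.mem_univ k, by positivity⟩
  set σ : ℝ := Real.sqrt S with hσ
  have hσpos : 0 < σ := Real.sqrt_pos.2 hSpos
  have hσ2 : σ ^ 2 = S := Real.sq_sqrt hSpos.le
  set X : Ω → ℝ := fun ω => ∑ k, a k * φ k ω with hXdef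
  have hXm : Measurable X :=
    Finset.measurable_sum _ fun (k : Fin n) _ => (hφm k).const_mul (a k)
  have hXb : ∀ᵐ ω ∂P, |X ω| ≤ ∑ k, |a k| := by
    filter_upwards [hb] with ω hω
    calc |X ω| ≤ ∑ k, |a k * φ k ω| := Finset.abs_sum_le_sum_abs _ _
      _ ≤ ∑ k, |a k| := by
          apply Finset.sum_le_sum
          intro i _
          rw [abs_mul]
          calc |a i| * |φ i ω| ≤ |a i| * 1 :=
                mul_le_mul_of_nonneg_left (hω i) (abs_nonneg _)
            _ = |a i| := mul_one _
  -- the MGF bounds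
  have hmgf : ∀ l : ℝ, ∫ ω, Real.exp (l * X ω) ∂P ≤ (1 + μ0) * Real.exp (l ^ 2 * S / 2) :=
    fun l => helper_mgf P φ hφm hb hquasi n a l
  have hexpint : ∀ l : ℝ, Integrable (fun ω => Real.exp (l * X ω)) P :=
    fun l => helper_expint P φ hφm hb n a l
  have hlsq : ∀ m : ℕ, ((m : ℝ) / σ) ^ 2 * S / 2 = (m : ℝ) ^ 2 / 2 := by
    intro m
    rw [div_pow, hσ2]
    field_simp
  have hlsq' : ∀ m : ℕ, (-((m : ℝ) / σ)) ^ 2 * S / 2 = (m : ℝ) ^ 2 / 2 := by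
    intro m
    rw [neg_pow, ← hlsq m]
    ring
  -- the series functions
  set G : ℕ → Ω → ℝ := fun m ω => gseq (X ω / σ) m with hG
  have hGeq : ∀ m : ℕ, G m = fun ω => Real.exp (((m : ℝ) + 1) ^ 2 / 8 - (m : ℝ) ^ 2) *
      (Real.exp (((m : ℝ) / σ) * X ω) + Real.exp ((-((m : ℝ) / σ)) * X ω)) := by
    intro m
    funext ω
    rw [hG]
    unfold gseq
    beta_reduce
    have h1 : (m : ℝ) * (X ω / σ) = ((m : ℝ) / σ) * X ω := by ring
    have h2 : -((m : ℝ) * (X ω / σ)) = (-((m : ℝ) / σ)) * X ω := by ring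
    rw [h2, h1]
  have hGint : ∀ m : ℕ, Integrable (G m) P := by
    intro m
    rw [hGeq m]
    exact (((hexpint ((m : ℝ) / σ)).add (hexpint (-((m : ℝ) / σ)))).const_mul _)
  have hGnn : ∀ m : ℕ, ∀ ω, 0 ≤ G m ω := fun m ω => gseq_nonneg _ m
  -- bound on ∫ G m
  set bseq : ℕ → ℝ := fun m => 2 * (1 + μ0) * Real.exp (1/8) * Real.exp (-(1/8)) ^ m
    with hbseq
  have hbnn : ∀ m, 0 ≤ bseq m := by
    intro m
    apply mul_nonneg (mul_nonneg (by linarith) (Real.exp_nonneg _)) (pow_nonneg hrnn m)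
  have hbsum : Summable bseq := (summable_geometric_of_lt_one hrnn hr1).mul_left _
  have hbtsum : ∑' m, bseq m = c₂ := by
    rw [hbseq, hc₂, tsum_mul_left, tsum_geometric_of_lt_one hrnn hr1]
  have hGbound : ∀ m : ℕ, ∫ ω, G m ω ∂P ≤ bseq m := by
    intro m
    rw [hGeq m]
    rw [MeasureTheory.integral_const_mul, integral_add (hexpint _) (hexpint _)]
    have e1 := hmgf ((m : ℝ) / σ)
    have e2 := hmgf (-((m : ℝ) / σ))
    rw [hlsq m] at e1
    rw [hlsq' m] at e2
    have hpos : (0:ℝ) < Real.exp (((m : ℝ) + 1) ^ 2 / 8 - (m : ℝ) ^ 2) := Real.exp_pos _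
    have hstep : Real.exp (((m : ℝ) + 1) ^ 2 / 8 - (m : ℝ) ^ 2) *
        (∫ ω, Real.exp (((m : ℝ) / σ) * X ω) ∂P + ∫ ω, Real.exp ((-((m : ℝ) / σ)) * X ω) ∂P)
        ≤ Real.exp (((m : ℝ) + 1) ^ 2 / 8 - (m : ℝ) ^ 2) *
          (2 * (1 + μ0) * Real.exp ((m : ℝ) ^ 2 / 2)) := by
      apply mul_le_mul_of_nonneg_left _ hpos.le
      linarith
    refine le_trans hstep ?_
    have hexpo : (((m : ℝ) + 1) ^ 2 / 8 - (m : ℝ) ^ 2) + (m : ℝ) ^ 2 / 2 ≤ 1/8 + (m : ℝ) * (-(1/8)) := by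
      rcases Nat.eq_zero_or_pos m with hm0 | hm1
      · subst hm0; norm_num
      · have h1 : (1:ℝ) ≤ (m:ℝ) := by exact_mod_cast hm1
        nlinarith [mul_le_mul_of_nonneg_left h1 (by linarith : (0:ℝ) ≤ (m:ℝ))]
    calc Real.exp (((m : ℝ) + 1) ^ 2 / 8 - (m : ℝ) ^ 2) * (2 * (1 + μ0) * Real.exp ((m : ℝ) ^ 2 / 2))
        = 2 * (1 + μ0) * Real.exp ((((m : ℝ) + 1) ^ 2 / 8 - (m : ℝ) ^ 2) + (m : ℝ) ^ 2 / 2) := by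
          rw [Real.exp_add]; ring
      _ ≤ 2 * (1 + μ0) * Real.exp (1/8 + (m : ℝ) * (-(1/8))) := by
          apply mul_le_mul_of_nonneg_left (Real.exp_le_exp.2 hexpo) (by linarith)
      _ = bseq m := by
          rw [hbseq, Real.exp_add, Real.exp_nat_mul]
          ring
  -- the target function
  set f : Ω → ℝ := fun ω => Real.exp (1/8 * (X ω) ^ 2 / S) with hf
  have hfm : Measurable f :=
    Real.measurable_exp.comp (((hXm.pow_const 2).const_mul (1/8)).div_const S)
  have hfnn : ∀ ω, 0 ≤ f ω := fun ω => Real.exp_nonneg _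
  have hfint : Integrable f P := by
    refine Integrable.mono' (integrable_const (Real.exp (1/8 * (∑ k, |a k|) ^ 2 / S)))
      hfm.aestronglyMeasurable ?_
    filter_upwards [hXb] with ω hω
    rw [Real.norm_eq_abs, abs_of_pos (Real.exp_pos _), Real.exp_le_exp]
    have h2 : X ω ^ 2 ≤ (∑ k, |a k|) ^ 2 := by
      rw [← sq_abs (X ω)]
      exact pow_le_pow_left₀ (abs_nonneg _) hω 2
    have hS' := hSpos
    gcongr
  have harg : ∀ ω, (1:ℝ)/8 * X ω ^ 2 / S = (X ω / σ) ^ 2 / 8 := by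
    intro ω
    rw [div_pow, hσ2]
    ring
  have hfptw : ∀ ω, f ω ≤ ∑' m, G m ω := by
    intro ω
    have h0 : f ω = Real.exp ((X ω / σ) ^ 2 / 8) := by
      rw [hf, ← harg ω]
    rw [h0, hG]
    exact helper_ptwise (X ω / σ)
  -- lintegral chain
  have key : ∫ ω, f ω ∂P ≤ c₂ := by
    rw [integral_eq_lintegral_of_nonneg_ae (Filter.Eventually.of_forall hfnn)
      hfm.aestronglyMeasurable]
    have hchain : ∫⁻ ω, ENNReal.ofReal (f ω) ∂P ≤ ENNReal.ofReal c₂ := by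
      calc ∫⁻ ω, ENNReal.ofReal (f ω) ∂P
          ≤ ∫⁻ ω, ∑' m, ENNReal.ofReal (G m ω) ∂P := by
            apply lintegral_mono
            intro ω
            calc ENNReal.ofReal (f ω) ≤ ENNReal.ofReal (∑' m, G m ω) :=
                  ENNReal.ofReal_le_ofReal (hfptw ω)
              _ = ∑' m, ENNReal.ofReal (G m ω) :=
                  ENNReal.ofReal_tsum_of_nonneg (fun m => hGnn m ω)
                    (by rw [hG]; exact helper_summable (X ω / σ))
        _ = ∑' m, ∫⁻ ω, ENNReal.ofReal (G m ω) ∂P :=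
            lintegral_tsum fun m => (ENNReal.measurable_ofReal.comp
              (by rw [hGeq m]; exact ((Real.measurable_exp.comp (hXm.const_mul _)).add
                (Real.measurable_exp.comp (hXm.const_mul _))).const_mul _)).aemeasurable
        _ ≤ ∑' m, ENNReal.ofReal (bseq m) := by
            apply ENNReal.tsum_le_tsum
            intro m
            rw [← ofReal_integral_eq_lintegral_ofReal (hGint m)
              (Filter.Eventually.of_forall fun ω => hGnn m ω)]
            exact ENNReal.ofReal_le_ofReal (hGbound m)
        _ = ENNReal.ofReal c₂ := by
            rw [← ENNReal.ofReal_tsum_of_nonneg hbnn hbsum, hbtsum]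
    calc (∫⁻ ω, ENNReal.ofReal (f ω) ∂P).toReal ≤ (ENNReal.ofReal c₂).toReal :=
          ENNReal.toReal_mono ENNReal.ofReal_ne_top hchain
      _ = c₂ := ENNReal.toReal_ofReal hc₂pos.le
  exact key
end

section
/- Let λ > 2 and let τ : ℕ → ℝ satisfy τ(1) ≥ 1 and τ(k+1) > λ·τ(k) for all k ≥ 1. Then the sequence t_k(x) = sin(2π τ(k) x) on the probability space [0,1) with Lebesgue measure is quasi-multiplicative, and its multiplicative error satisfies μ = ∑_S |∫_0^1 ∏_{j∈S} sin(2π τ(j) x) dx| ≤ λ(λ−1)/(π(λ−2)²), the sum taken over all finite nonempty subsets S of the positive integers. -/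
open MeasureTheory Real Finset

namespace QM12


lemma sum_pow_pred_le {r : ℝ} (hr0 : 0 ≤ r) (hr1 : r < 1) (v : Finset ℕ)
    (hv : ∀ k ∈ v, 1 ≤ k) : ∑ k ∈ v, r ^ (k - 1) ≤ (1 - r)⁻¹ := by
  have hinj : Set.InjOn (fun k => k - 1) ↑v := by
    intro a ha b hb hab
    have := hv a ha; have := hv b hb; simp at hab; omega
  have h1 : ∑ k ∈ v, r ^ (k - 1) = ∑ i ∈ v.image (fun k => k - 1), r ^ i :=
    (Finset.sum_image (fun a ha b hb => hinj ha hb)).symm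
  rw [h1]
  exact (Summable.sum_le_tsum _ (fun i _ => pow_nonneg hr0 i) (summable_geometric_of_lt_one hr0 hr1)).trans_eq
    (tsum_geometric_of_lt_one hr0 hr1)

lemma sum_pow_le {r : ℝ} (hr0 : 0 ≤ r) (hr1 : r < 1) (v : Finset ℕ)
    (hv : ∀ k ∈ v, 1 ≤ k) : ∑ k ∈ v, r ^ k ≤ r / (1 - r) := by
  have h1 : ∑ k ∈ v, r ^ k = r * ∑ k ∈ v, r ^ (k - 1) := by
    rw [Finset.mul_sum]
    refine Finset.sum_congr rfl fun k hk => ?_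
    obtain ⟨j, rfl⟩ : ∃ j, k = j + 1 := ⟨k - 1, by have := hv k hk; omega⟩
    simp [pow_succ]; ring
  rw [h1, div_eq_mul_inv]
  exact mul_le_mul_of_nonneg_left (sum_pow_pred_le hr0 hr1 v hv) hr0


lemma sin_eq' (z : ℂ) : Complex.sin z =
    (Complex.exp (z * Complex.I) + -Complex.exp (-(z * Complex.I))) * (2 * Complex.I)⁻¹ := by
  rw [Complex.sin]
  field_simp
  ring_nf
  simp [Complex.I_sq]

lemma norm_integral_exp (θ : ℝ) (hθ : θ ≠ 0) :
    ‖∫ x in Set.Ico (0:ℝ) 1, Complex.exp ((θ:ℂ) * x * Complex.I)‖ ≤ 2 / |θ| := by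
  have hc : (θ:ℂ) * Complex.I ≠ 0 := by
    simp [Complex.ext_iff, hθ]
  have h1 : ∀ x : ℝ, (θ:ℂ) * x * Complex.I = ((θ:ℂ) * Complex.I) * x := fun x => by ring
  simp only [h1]
  rw [integral_Ico_eq_integral_Ioo, ← integral_Ioc_eq_integral_Ioo,
    ← intervalIntegral.integral_of_le zero_le_one, integral_exp_mul_complex hc]
  have hnorm : ‖(θ:ℂ) * Complex.I‖ = |θ| := by
    simp
  rw [norm_div, hnorm]
  have hnum : ‖Complex.exp (↑θ * Complex.I * ↑(1:ℝ)) - Complex.exp (↑θ * Complex.I * ↑(0:ℝ))‖ ≤ 2 := by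
    refine (norm_sub_le _ _).trans ?_
    have e1 : ‖Complex.exp (↑θ * Complex.I * ↑(1:ℝ))‖ = 1 := by
      rw [Complex.norm_exp]
      simp
    have e2 : ‖Complex.exp (↑θ * Complex.I * ↑(0:ℝ))‖ = 1 := by
      rw [Complex.norm_exp]
      simp
    rw [e1, e2]; norm_num
  gcongr

lemma prod_sin_eq (S : Finset ℕ) (a : ℕ → ℂ) (x : ℂ) :
    (∏ j ∈ S, Complex.sin (a j * x)) =
    ∑ T ∈ S.powerset, ((-1) ^ (S \ T).card * ((2 * Complex.I)⁻¹) ^ S.card) *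
      Complex.exp (((∑ j ∈ T, a j) - ∑ j ∈ S \ T, a j) * x * Complex.I) := by
  calc (∏ j ∈ S, Complex.sin (a j * x))
      = ∏ j ∈ S, ((Complex.exp (a j * x * Complex.I) +
          -Complex.exp (-(a j * x * Complex.I))) * (2 * Complex.I)⁻¹) := by
        exact Finset.prod_congr rfl fun j _ => sin_eq' (a j * x)
    _ = (∏ j ∈ S, (Complex.exp (a j * x * Complex.I) +
          -Complex.exp (-(a j * x * Complex.I)))) * ((2 * Complex.I)⁻¹) ^ S.card := by
        rw [Finset.prod_mul_distrib, Finset.prod_const]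
    _ = (∑ T ∈ S.powerset, (∏ j ∈ T, Complex.exp (a j * x * Complex.I)) *
          ∏ j ∈ S \ T, -Complex.exp (-(a j * x * Complex.I))) * ((2 * Complex.I)⁻¹) ^ S.card := by
        rw [Finset.prod_add]
    _ = _ := by
        rw [Finset.sum_mul]
        refine Finset.sum_congr rfl fun T hT => ?_
        have h1 : (∏ j ∈ T, Complex.exp (a j * x * Complex.I)) =
            Complex.exp ((∑ j ∈ T, a j) * x * Complex.I) := by
          rw [← Complex.exp_sum]
          congr 1
          rw [Finset.sum_mul, Finset.sum_mul]
        have h2 : (∏ j ∈ S \ T, -Complex.exp (-(a j * x * Complex.I))) =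
            (-1) ^ (S \ T).card * Complex.exp (-((∑ j ∈ S \ T, a j) * x * Complex.I)) := by
          simp only [neg_eq_neg_one_mul (Complex.exp _)]
          rw [Finset.prod_mul_distrib, Finset.prod_const, ← Complex.exp_sum]
          congr 2
          simp only [show ∀ j:ℕ, -(a j * x * Complex.I) = a j * (-(x * Complex.I)) from
            fun j => by ring, ← Finset.sum_mul]
          ring
        have h3 : ((∑ j ∈ T, a j) - ∑ j ∈ S \ T, a j) * x * Complex.I =
            (∑ j ∈ T, a j) * x * Complex.I - (∑ j ∈ S \ T, a j) * x * Complex.I := by ring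
        rw [h1, h2, h3, Complex.exp_sub, Complex.exp_neg, div_eq_mul_inv]
        ring

variable {lam : ℝ} {τ : ℕ → ℝ}

/-- τ j ≥ λ^(j-k) τ k for 1 ≤ k ≤ j -/
lemma tau_growth (hlam : 2 < lam) (hτ1 : 1 ≤ τ 1)
    (hτ : ∀ k, 1 ≤ k → lam * τ k < τ (k + 1)) :
    ∀ j k, 1 ≤ k → k ≤ j → lam ^ (j - k) * τ k ≤ τ j := by
  have hl0 : (0:ℝ) < lam := by linarith
  intro j
  induction j with
  | zero => intro k hk hkj; omega
  | succ n ih =>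
    intro k hk hkj
    rcases Nat.lt_or_ge n k with h | h
    · have : k = n + 1 := by omega
      subst this; simp
    · have h1 : lam ^ (n - k) * τ k ≤ τ n := ih k hk h
      have h2 : lam * τ n < τ (n + 1) := hτ n (by omega)
      have : n + 1 - k = (n - k) + 1 := by omega
      rw [this, pow_succ]
      nlinarith [pow_pos hl0 (n - k)]

lemma tau_ge_pow (hlam : 2 < lam) (hτ1 : 1 ≤ τ 1)
    (hτ : ∀ k, 1 ≤ k → lam * τ k < τ (k + 1)) {k : ℕ} (hk : 1 ≤ k) :
    lam ^ (k - 1) ≤ τ k := by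
  have := tau_growth hlam hτ1 hτ k 1 le_rfl hk
  nlinarith [pow_pos (show (0:ℝ) < lam by linarith) (k-1)]

lemma tau_pos (hlam : 2 < lam) (hτ1 : 1 ≤ τ 1)
    (hτ : ∀ k, 1 ≤ k → lam * τ k < τ (k + 1)) {k : ℕ} (hk : 1 ≤ k) :
    0 < τ k :=
  lt_of_lt_of_le (pow_pos (by linarith) _) (tau_ge_pow hlam hτ1 hτ hk)

lemma erase_sum_le (hlam : 2 < lam) (hτ1 : 1 ≤ τ 1)
    (hτ : ∀ k, 1 ≤ k → lam * τ k < τ (k + 1))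
    (S : Finset ℕ) (h0 : 0 ∉ S) (m : ℕ) (hm : m ∈ S) (hmax : ∀ j ∈ S, j ≤ m) :
    ∑ j ∈ S.erase m, τ j ≤ τ m / (lam - 1) := by
  have hl1 : (1:ℝ) < lam := by linarith
  have hl0 : (0:ℝ) < lam := by linarith
  have hj1 : ∀ j ∈ S, 1 ≤ j := fun j hj => Nat.one_le_iff_ne_zero.mpr (fun h => h0 (h ▸ hj))
  have hm1 : 1 ≤ m := hj1 m hm
  have hτm : 0 < τ m := QM12.tau_pos hlam hτ1 hτ hm1
  have step1 : ∀ j ∈ S.erase m, τ j ≤ τ m * lam⁻¹ ^ (m - j) := by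
    intro j hj
    have hjS := Finset.mem_of_mem_erase hj
    have hjm : j ≤ m := hmax j hjS
    have := QM12.tau_growth hlam hτ1 hτ m j (hj1 j hjS) hjm
    have hp : (0:ℝ) < lam ^ (m - j) := pow_pos hl0 _
    rw [inv_pow, ← div_eq_mul_inv, le_div_iff₀ hp]
    nlinarith
  calc ∑ j ∈ S.erase m, τ j ≤ ∑ j ∈ S.erase m, τ m * lam⁻¹ ^ (m - j) :=
        Finset.sum_le_sum step1
    _ = τ m * ∑ j ∈ S.erase m, lam⁻¹ ^ (m - j) := by rw [Finset.mul_sum]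
    _ = τ m * ∑ k ∈ (S.erase m).image (fun j => m - j), lam⁻¹ ^ k := by
        congr 1
        refine (Finset.sum_image ?_).symm
        intro x hx y hy hxy
        have hx' := hmax x (Finset.mem_of_mem_erase hx)
        have hy' := hmax y (Finset.mem_of_mem_erase hy)
        omega
    _ ≤ τ m * (lam⁻¹ / (1 - lam⁻¹)) := by
        refine mul_le_mul_of_nonneg_left ?_ hτm.le
        refine QM12.sum_pow_le (by positivity) (inv_lt_one_of_one_lt₀ hl1) _ ?_
        intro k hk
        simp only [Finset.mem_image] at hk
        obtain ⟨j, hj, rfl⟩ := hk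
        have h1 := Finset.mem_of_mem_erase hj
        have h2 := Finset.ne_of_mem_erase hj
        have := hmax j h1
        omega
    _ = τ m / (lam - 1) := by
        have h1 : lam ≠ 0 := by linarith
        have h2 : lam - 1 ≠ 0 := by linarith
        field_simp

-- frequency lower bound
lemma freq_lb (hlam : 2 < lam) (hτ1 : 1 ≤ τ 1)
    (hτ : ∀ k, 1 ≤ k → lam * τ k < τ (k + 1))
    (S : Finset ℕ) (h0 : 0 ∉ S) (m : ℕ) (hm : m ∈ S) (hmax : ∀ j ∈ S, j ≤ m)
    (T : Finset ℕ) (hT : T ⊆ S) :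
    (lam - 2) / (lam - 1) * τ m ≤ |(∑ j ∈ T, τ j) - ∑ j ∈ S \ T, τ j| := by
  have hj1 : ∀ j ∈ S, 1 ≤ j := fun j hj => Nat.one_le_iff_ne_zero.mpr (fun h => h0 (h ▸ hj))
  have hτm : 0 < τ m := QM12.tau_pos hlam hτ1 hτ (hj1 m hm)
  have hpos : ∀ j ∈ S, 0 ≤ τ j := fun j hj => (QM12.tau_pos hlam hτ1 hτ (hj1 j hj)).le
  have hE := erase_sum_le hlam hτ1 hτ S h0 m hm hmax
  have key : ∀ (A B : Finset ℕ), A ⊆ S → B ⊆ S → m ∈ A → Disjoint A B →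
      τ m - τ m / (lam - 1) ≤ (∑ j ∈ A, τ j) - ∑ j ∈ B, τ j := by
    intro A B hA hB hmA hdisj
    have h1 : τ m ≤ ∑ j ∈ A, τ j := by
      refine Finset.single_le_sum (fun j hj => hpos j (hA hj)) hmA
    have h2 : ∑ j ∈ B, τ j ≤ ∑ j ∈ S.erase m, τ j := by
      refine Finset.sum_le_sum_of_subset_of_nonneg ?_ (fun j hj _ => hpos j (Finset.mem_of_mem_erase hj))
      intro j hj
      refine Finset.mem_erase.mpr ⟨?_, hB hj⟩
      intro h; subst h
      exact (Finset.disjoint_left.mp hdisj hmA) hj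
    linarith
  have hgoal : τ m - τ m / (lam - 1) = (lam - 2) / (lam - 1) * τ m := by
    have : lam - 1 ≠ 0 := by linarith
    field_simp
    ring
  by_cases hmT : m ∈ T
  · have := key T (S \ T) hT Finset.sdiff_subset hmT ?_
    · calc (lam - 2) / (lam - 1) * τ m = τ m - τ m / (lam - 1) := hgoal.symm
        _ ≤ (∑ j ∈ T, τ j) - ∑ j ∈ S \ T, τ j := this
        _ ≤ |(∑ j ∈ T, τ j) - ∑ j ∈ S \ T, τ j| := le_abs_self _
    · exact Finset.disjoint_sdiff
  · have hmST : m ∈ S \ T := Finset.mem_sdiff.mpr ⟨hm, hmT⟩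
    have := key (S \ T) T Finset.sdiff_subset hT hmST ?_
    · calc (lam - 2) / (lam - 1) * τ m = τ m - τ m / (lam - 1) := hgoal.symm
        _ ≤ (∑ j ∈ S \ T, τ j) - ∑ j ∈ T, τ j := this
        _ ≤ |(∑ j ∈ T, τ j) - ∑ j ∈ S \ T, τ j| := by
            rw [abs_sub_comm]; exact le_abs_self _
    · exact Finset.sdiff_disjoint

lemma ofReal_setIntegral (f : ℝ → ℝ) (s : Set ℝ) :
    ∫ x in s, ((f x : ℝ) : ℂ) = ((∫ x in s, f x : ℝ) : ℂ) := by
  have := @integral_ofReal ℝ _ (volume.restrict s) ℂ _ f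
  exact this


lemma core (hlam : 2 < lam) (hτ1 : 1 ≤ τ 1)
    (hτ : ∀ k, 1 ≤ k → lam * τ k < τ (k + 1))
    (S : Finset ℕ) (hS : S.Nonempty) (h0 : 0 ∉ S) :
    |∫ x in Set.Ico (0:ℝ) 1, ∏ j ∈ S, Real.sin (2 * π * τ j * x)| ≤
      (lam - 1) / (π * (lam - 2)) / τ (S.max' hS) := by
  set m := S.max' hS with hmdef
  have hm : m ∈ S := S.max'_mem hS
  have hmax : ∀ j ∈ S, j ≤ m := fun j hj => S.le_max' j hj
  have hj1 : ∀ j ∈ S, 1 ≤ j := fun j hj => Nat.one_le_iff_ne_zero.mpr (fun h => h0 (h ▸ hj))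
  have hτm : 0 < τ m := QM12.tau_pos hlam hτ1 hτ (hj1 m hm)
  have hπ : (0:ℝ) < π := pi_pos
  -- the per-term bound
  set B : ℝ := (lam - 1) / (π * (lam - 2)) / τ m with hBdef
  have hB : 0 < B := by
    exact div_pos (div_pos (by linarith) (mul_pos hπ (by linarith))) hτm
  -- frequencies
  set θ : Finset ℕ → ℝ := fun T => (∑ j ∈ T, 2 * π * τ j) - ∑ j ∈ S \ T, 2 * π * τ j with hθdef
  have hθ_eq : ∀ T, θ T = 2 * π * ((∑ j ∈ T, τ j) - ∑ j ∈ S \ T, τ j) := by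
    intro T
    simp only [hθdef, ← Finset.mul_sum]
    ring
  have hθ_lb : ∀ T ⊆ S, 2 * π * ((lam - 2) / (lam - 1) * τ m) ≤ |θ T| := by
    intro T hT
    rw [hθ_eq, abs_mul, abs_of_pos (by positivity : (0:ℝ) < 2 * π)]
    exact mul_le_mul_of_nonneg_left (freq_lb hlam hτ1 hτ S h0 m hm hmax T hT) (by positivity)
  have hθ_ne : ∀ T ⊆ S, θ T ≠ 0 := by
    intro T hT h
    have := hθ_lb T hT
    rw [h, abs_zero] at this
    nlinarith [mul_pos (mul_pos two_pos hπ) (mul_pos (div_pos (by linarith : (0:ℝ) < lam - 2) (by linarith : (0:ℝ) < lam - 1)) hτm)]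
  -- step 1: pass to ℂ
  rw [show |∫ x in Set.Ico (0:ℝ) 1, ∏ j ∈ S, Real.sin (2 * π * τ j * x)| =
      ‖∫ x in Set.Ico (0:ℝ) 1, ((∏ j ∈ S, Real.sin (2 * π * τ j * x) : ℝ) : ℂ)‖ by
    rw [ofReal_setIntegral]
    simp [Complex.norm_real]]
  -- step 2: expand the product pointwise
  have hpt : ∀ x : ℝ, ((∏ j ∈ S, Real.sin (2 * π * τ j * x) : ℝ) : ℂ) =
      ∑ T ∈ S.powerset, ((-1) ^ (S \ T).card * ((2 * Complex.I)⁻¹) ^ S.card) *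
        Complex.exp (((θ T : ℝ) : ℂ) * (x : ℝ) * Complex.I) := by
    intro x
    push_cast [Complex.ofReal_sin]
    rw [show (∏ j ∈ S, Complex.sin (2 * π * τ j * x)) =
        ∏ j ∈ S, Complex.sin ((((2 * π * τ j : ℝ)) : ℂ) * (x:ℂ)) by simp only [Complex.ofReal_mul, Complex.ofReal_ofNat]]
    rw [QM12.prod_sin_eq S (fun j => ((2 * π * τ j : ℝ) : ℂ)) (x : ℂ)]
    refine Finset.sum_congr rfl fun T hT => ?_
    congr 1
    congr 1
    push_cast [hθdef]
    ring
  simp only [hpt]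
  have hint : ∀ T ∈ S.powerset, IntegrableOn (fun x : ℝ =>
      ((-1:ℂ)) ^ (S \ T).card * ((2 * Complex.I)⁻¹) ^ S.card *
        Complex.exp (((θ T : ℝ) : ℂ) * (x:ℝ) * Complex.I)) (Set.Ico (0:ℝ) 1) := by
    intro T _
    have hcont : Continuous fun x : ℝ =>
        ((-1:ℂ)) ^ (S \ T).card * ((2 * Complex.I)⁻¹) ^ S.card *
          Complex.exp (((θ T : ℝ) : ℂ) * (x:ℝ) * Complex.I) := by
      fun_prop
    exact hcont.integrableOn_Icc.mono_set Set.Ico_subset_Icc_self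
  rw [MeasureTheory.integral_finset_sum _ hint]
  have hterm : ∀ T ∈ S.powerset,
      ‖∫ x in Set.Ico (0:ℝ) 1, ((-1:ℂ)) ^ (S \ T).card * ((2 * Complex.I)⁻¹) ^ S.card *
        Complex.exp (((θ T : ℝ) : ℂ) * (x:ℝ) * Complex.I)‖ ≤ ((1:ℝ)/2) ^ S.card * B := by
    intro T hT
    have hTS : T ⊆ S := Finset.mem_powerset.mp hT
    rw [MeasureTheory.integral_const_mul, norm_mul]
    have hc : ‖((-1:ℂ)) ^ (S \ T).card * ((2 * Complex.I)⁻¹) ^ S.card‖ = ((1:ℝ)/2) ^ S.card := by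
      simp [norm_mul, norm_pow, norm_inv, map_mul]
    rw [hc]
    refine mul_le_mul_of_nonneg_left ?_ (by positivity)
    refine (QM12.norm_integral_exp (θ T) (hθ_ne T hTS)).trans ?_
    have h1 := hθ_lb T hTS
    have h2 : (0:ℝ) < 2 * π * ((lam - 2) / (lam - 1) * τ m) := by
      have : (0:ℝ) < (lam - 2) / (lam - 1) := div_pos (by linarith) (by linarith)
      positivity
    calc 2 / |θ T| ≤ 2 / (2 * π * ((lam - 2) / (lam - 1) * τ m)) := by
          apply div_le_div_of_nonneg_left two_pos.le h2 h1
        _ = B := by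
          rw [hBdef]
          have h3 : lam - 1 ≠ 0 := by linarith
          have h4 : lam - 2 ≠ 0 := by linarith
          field_simp
  calc ‖∑ T ∈ S.powerset, ∫ x in Set.Ico (0:ℝ) 1,
        ((-1:ℂ)) ^ (S \ T).card * ((2 * Complex.I)⁻¹) ^ S.card *
          Complex.exp (((θ T : ℝ) : ℂ) * (x:ℝ) * Complex.I)‖
      ≤ ∑ T ∈ S.powerset, ‖∫ x in Set.Ico (0:ℝ) 1,
        ((-1:ℂ)) ^ (S \ T).card * ((2 * Complex.I)⁻¹) ^ S.card *
          Complex.exp (((θ T : ℝ) : ℂ) * (x:ℝ) * Complex.I)‖ := norm_sum_le _ _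
    _ ≤ ∑ T ∈ S.powerset, ((1:ℝ)/2) ^ S.card * B := Finset.sum_le_sum hterm
    _ = (2:ℝ) ^ S.card * (((1:ℝ)/2) ^ S.card * B) := by
        rw [Finset.sum_const, Finset.card_powerset]
        simp [nsmul_eq_mul]
    _ = B := by
        rw [← mul_assoc, ← mul_pow]
        norm_num

end QM12

open MeasureTheory Real

theorem stmt_12 (lam : ℝ) (hlam : 2 < lam)
    (τ : ℕ → ℝ) (hτ1 : 1 ≤ τ 1) (hτ : ∀ k, 1 ≤ k → lam * τ k < τ (k + 1)) :
    Summable (fun S : {S : Finset ℕ // S.Nonempty ∧ 0 ∉ S} =>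
      |∫ x in Set.Ico (0 : ℝ) 1, ∏ j ∈ S.1, Real.sin (2 * π * τ j * x)|) ∧
    (∑' S : {S : Finset ℕ // S.Nonempty ∧ 0 ∉ S},
      |∫ x in Set.Ico (0 : ℝ) 1, ∏ j ∈ S.1, Real.sin (2 * π * τ j * x)|) ≤
      lam * (lam - 1) / (π * (lam - 2) ^ 2) := by
  have hπ : (0:ℝ) < π := pi_pos
  have hl0 : (0:ℝ) < lam := by linarith
  set f : {S : Finset ℕ // S.Nonempty ∧ 0 ∉ S} → ℝ := fun S =>
    |∫ x in Set.Ico (0 : ℝ) 1, ∏ j ∈ S.1, Real.sin (2 * π * τ j * x)| with hfdef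
  have hf0 : 0 ≤ f := fun S => abs_nonneg _
  set C : ℝ := (lam - 1) / (π * (lam - 2)) with hCdef
  have hC : 0 < C := div_pos (by linarith) (mul_pos hπ (by linarith))
  set g : {S : Finset ℕ // S.Nonempty ∧ 0 ∉ S} → ℕ := fun S => S.1.max' S.2.1 with hgdef
  have hg1 : ∀ S, 1 ≤ g S := by
    intro S
    refine Nat.one_le_iff_ne_zero.mpr fun h => S.2.2 ?_
    have := S.1.max'_mem S.2.1
    rwa [show S.1.max' S.2.1 = 0 from h] at this
  -- pointwise bound
  have hfb : ∀ S, f S ≤ C * (lam⁻¹) ^ (g S - 1) := by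
    intro S
    refine (QM12.core hlam hτ1 hτ S.1 S.2.1 S.2.2).trans ?_
    have h1 : lam ^ (g S - 1) ≤ τ (g S) := QM12.tau_ge_pow hlam hτ1 hτ (hg1 S)
    have h2 : (0:ℝ) < lam ^ (g S - 1) := pow_pos hl0 _
    calc C / τ (S.1.max' S.2.1) = C / τ (g S) := rfl
      _ ≤ C / lam ^ (g S - 1) := div_le_div_of_nonneg_left hC.le h2 h1
      _ = C * (lam⁻¹) ^ (g S - 1) := by rw [div_eq_mul_inv, ← inv_pow]
  have key : ∀ u : Finset {S : Finset ℕ // S.Nonempty ∧ 0 ∉ S},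
      ∑ S ∈ u, f S ≤ lam * (lam - 1) / (π * (lam - 2) ^ 2) := by
    intro u
    have step1 : ∑ S ∈ u, f S ≤ C * ∑ S ∈ u, (lam⁻¹) ^ (g S - 1) := by
      rw [Finset.mul_sum]
      exact Finset.sum_le_sum fun S _ => hfb S
    have step2 : ∑ S ∈ u, (lam⁻¹) ^ (g S - 1) ≤ ∑ y ∈ u.image g, (2 / lam) ^ (y - 1) := by
      rw [← Finset.sum_fiberwise_of_maps_to (fun S (hS : S ∈ u) => Finset.mem_image_of_mem g hS)
        (fun S => (lam⁻¹) ^ (g S - 1))]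
      refine Finset.sum_le_sum fun y hy => ?_
      have hcard : (u.filter (fun S => g S = y)).card ≤ 2 ^ (y - 1) := by
        have := Finset.card_le_card_of_injOn (s := u.filter (fun S => g S = y))
          (fun S : {S : Finset ℕ // S.Nonempty ∧ 0 ∉ S} => S.1.erase y)
          (t := (Finset.Ioo 0 y).powerset) ?_ ?_
        · simpa [Nat.card_Ioo] using this
        · intro S hS
          simp only [Finset.coe_filter, Finset.mem_filter, Set.mem_setOf_eq, Finset.mem_coe] at hS ⊢
          rw [Finset.mem_powerset]
          intro j hj
          have hjS := Finset.mem_of_mem_erase hj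
          have hjy := Finset.ne_of_mem_erase hj
          have h1 : 1 ≤ j := Nat.one_le_iff_ne_zero.mpr (fun h => S.2.2 (h ▸ hjS))
          have h2 : j ≤ g S := S.1.le_max' j hjS
          rw [Finset.mem_Ioo]
          omega
        · intro S hS T hT hST
          simp only [Finset.coe_filter, Set.mem_setOf_eq] at hS hT
          have hyS : y ∈ S.1 := hS.2 ▸ S.1.max'_mem S.2.1
          have hyT : y ∈ T.1 := hT.2 ▸ T.1.max'_mem T.2.1
          apply Subtype.ext
          rw [← Finset.insert_erase hyS, ← Finset.insert_erase hyT]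
          simp only at hST
          rw [hST]
      calc ∑ S ∈ u.filter (fun S => g S = y), (lam⁻¹) ^ (g S - 1)
          = (u.filter (fun S => g S = y)).card * (lam⁻¹) ^ (y - 1) := by
            rw [Finset.sum_congr rfl (fun S hS => by
              rw [(Finset.mem_filter.mp hS).2]), Finset.sum_const, nsmul_eq_mul]
        _ ≤ (2:ℝ) ^ (y - 1) * (lam⁻¹) ^ (y - 1) := by
            refine mul_le_mul_of_nonneg_right ?_ (by positivity)
            exact_mod_cast hcard
        _ = (2 / lam) ^ (y - 1) := by
            rw [div_eq_mul_inv, mul_pow]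
    have step3 : ∑ y ∈ u.image g, (2 / lam) ^ (y - 1) ≤ (1 - 2 / lam)⁻¹ := by
      refine QM12.sum_pow_pred_le (by positivity) ?_ _ ?_
      · rw [div_lt_one hl0]; linarith
      · intro y hy
        obtain ⟨S, _, rfl⟩ := Finset.mem_image.mp hy
        exact hg1 S
    calc ∑ S ∈ u, f S ≤ C * ∑ S ∈ u, (lam⁻¹) ^ (g S - 1) := step1
      _ ≤ C * (1 - 2 / lam)⁻¹ := mul_le_mul_of_nonneg_left (step2.trans step3) hC.le
      _ = lam * (lam - 1) / (π * (lam - 2) ^ 2) := by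
          rw [hCdef]
          have h1 : lam - 2 ≠ 0 := by linarith
          have h2 : (1:ℝ) - 2 / lam ≠ 0 := by
            rw [sub_ne_zero]
            intro h
            rw [eq_div_iff (by linarith)] at h
            linarith
          field_simp
  exact ⟨summable_of_sum_le hf0 key, Summable.tsum_le_of_sum_le (summable_of_sum_le hf0 key) key⟩
end

section
/- Let λ > 2 and let τ : ℕ → ℝ satisfy τ(1) ≥ 1 and τ(k+1) > λ·τ(k) for all k ≥ 1. Then for every finite collection of indices n_1 < n_2 < … < n_ν one has |∫_0^1 ∏_{j=1}^ν sin(2π τ(n_j) x) dx| ≤ (λ−1)/(π(λ−2)·τ(n_ν)). -/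
open MeasureTheory Real

section Auxiliary
open Complex Finset

lemma sin_prod_expand (θ : ℕ → ℝ) (S : Finset ℕ) (x : ℝ) :
    ((∏ j ∈ S, Real.sin (θ j * x) : ℝ) : ℂ) =
      (Complex.I / 2) ^ S.card * ∑ T ∈ S.powerset,
        (-1 : ℂ) ^ (S \ T).card *
          Complex.exp ((((∑ j ∈ S \ T, θ j) - ∑ j ∈ T, θ j : ℝ) : ℂ) * Complex.I * x) := by
  push_cast
  have h1 : ∀ j : ℕ, Complex.sin ((θ j : ℂ) * x) =
      (Complex.exp (-((θ j : ℂ) * x) * Complex.I) +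
        (-1) * Complex.exp (((θ j : ℂ) * x) * Complex.I)) * (Complex.I / 2) := by
    intro j
    rw [Complex.sin]
    ring
  simp_rw [h1]
  rw [Finset.prod_mul_distrib, Finset.prod_const, Finset.prod_add, mul_comm]
  congr 1
  refine Finset.sum_congr rfl fun T hT => ?_
  rw [Finset.prod_mul_distrib, Finset.prod_const, ← Complex.exp_sum, ← Complex.exp_sum,
    mul_left_comm, mul_assoc, ← Complex.exp_add]
  congr 2
  simp only [neg_mul, sub_mul, Finset.sum_neg_distrib, ← Finset.sum_mul]
  ring

lemma tau_grow (lam : ℝ) (hlam : 2 < lam) (τ : ℕ → ℝ) (hτ1 : 1 ≤ τ 1)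
    (hτ : ∀ k, 1 ≤ k → lam * τ k < τ (k + 1)) :
    ∀ d j, 1 ≤ j → τ j * lam ^ d ≤ τ (j + d) := by
  have hlam0 : (0:ℝ) < lam := by linarith
  have hpos : ∀ k, 1 ≤ k → (0:ℝ) < τ k := by
    intro k hk
    induction k with
    | zero => omega
    | succ n ih =>
      rcases Nat.lt_or_ge 1 (n+1) with h | h
      · have hn : 1 ≤ n := by omega
        have := hτ n hn
        nlinarith [ih hn]
      · have : n + 1 = 1 := by omega
        rw [this]; linarith
  intro d
  induction d with
  | zero => simp
  | succ n ih =>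
    intro j hj
    have h1 := ih j hj
    have h2 := hτ (j + n) (by omega)
    calc τ j * lam ^ (n+1) = (τ j * lam ^ n) * lam := by ring
      _ ≤ τ (j + n) * lam := by nlinarith [hpos j hj]
      _ ≤ τ (j + n + 1) := by nlinarith [hpos (j+n) (by omega : 1 ≤ j + n)]

lemma tau_pos (lam : ℝ) (hlam : 2 < lam) (τ : ℕ → ℝ) (hτ1 : 1 ≤ τ 1)
    (hτ : ∀ k, 1 ≤ k → lam * τ k < τ (k + 1)) :
    ∀ k, 1 ≤ k → 1 ≤ τ k := by
  intro k hk
  have := tau_grow lam hlam τ hτ1 hτ (k - 1) 1 le_rfl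
  rw [show 1 + (k - 1) = k by omega] at this
  have h1 : (1:ℝ) ≤ lam ^ (k-1) := one_le_pow₀ (by linarith)
  nlinarith

lemma sum_erase_le (lam : ℝ) (hlam : 2 < lam) (τ : ℕ → ℝ) (hτ1 : 1 ≤ τ 1)
    (hτ : ∀ k, 1 ≤ k → lam * τ k < τ (k + 1))
    (S : Finset ℕ) (hS : S.Nonempty) (hS1 : ∀ j ∈ S, 1 ≤ j) :
    ∑ j ∈ S.erase (S.max' hS), τ j ≤ τ (S.max' hS) / (lam - 1) := by
  set m := S.max' hS with hm
  have hm1 : 1 ≤ m := hS1 _ (S.max'_mem hS)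
  have hτm : 1 ≤ τ m := tau_pos lam hlam τ hτ1 hτ m hm1
  have hlam0 : (0:ℝ) < lam := by linarith
  have key : ∀ j ∈ S.erase m, τ j ≤ τ m * (1/lam) ^ (m - j) := by
    intro j hj
    have hjS := Finset.mem_of_mem_erase hj
    have hj1 : 1 ≤ j := hS1 _ hjS
    have hjm : j ≤ m := S.le_max' _ hjS
    have h := tau_grow lam hlam τ hτ1 hτ (m - j) j hj1
    rw [show j + (m - j) = m by omega] at h
    have hpow : (0:ℝ) < lam ^ (m - j) := pow_pos hlam0 _
    rw [div_pow, one_pow, mul_one_div, le_div_iff₀ hpow]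
    linarith
  have hgeo : ∑ j ∈ S.erase m, (1/lam) ^ (m - j) ≤ 1 / (lam - 1) := by
    have h01 : (0:ℝ) ≤ 1/lam := by positivity
    have h11 : (1:ℝ)/lam < 1 := by rw [div_lt_one hlam0]; linarith
    have himg : ∑ j ∈ S.erase m, (1/lam) ^ (m - j)
        = ∑ i ∈ (S.erase m).image (fun j => m - j), (1/lam) ^ i := by
      rw [Finset.sum_image]
      intro a ha b hb hab
      have ha' : a ≤ m := S.le_max' _ (Finset.mem_of_mem_erase ha)
      have hb' : b ≤ m := S.le_max' _ (Finset.mem_of_mem_erase hb)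
      simp only at hab
      omega
    rw [himg]
    have hsub : (S.erase m).image (fun j => m - j) ⊆ Finset.Ico 1 m := by
      intro i hi
      simp only [Finset.mem_image] at hi
      obtain ⟨j, hj, rfl⟩ := hi
      have hjm : j ≤ m := S.le_max' _ (Finset.mem_of_mem_erase hj)
      have hjne : j ≠ m := Finset.ne_of_mem_erase hj
      have hj1 : 1 ≤ j := hS1 _ (Finset.mem_of_mem_erase hj)
      simp only [Finset.mem_Ico]
      omega
    calc ∑ i ∈ (S.erase m).image (fun j => m - j), (1/lam) ^ i
        ≤ ∑ i ∈ Finset.Ico 1 m, (1/lam) ^ i :=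
          Finset.sum_le_sum_of_subset_of_nonneg hsub (fun i _ _ => by positivity)
      _ ≤ (1/lam) ^ 1 / (1 - 1/lam) := geom_sum_Ico_le_of_lt_one h01 h11
      _ = 1 / (lam - 1) := by
          rw [pow_one]
          field_simp
  calc ∑ j ∈ S.erase m, τ j ≤ ∑ j ∈ S.erase m, τ m * (1/lam) ^ (m - j) :=
        Finset.sum_le_sum key
    _ = τ m * ∑ j ∈ S.erase m, (1/lam) ^ (m - j) := by rw [Finset.mul_sum]
    _ ≤ τ m * (1 / (lam - 1)) := mul_le_mul_of_nonneg_left hgeo (by linarith)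
    _ = τ m / (lam - 1) := by ring

lemma freq_bound (τ : ℕ → ℝ) (S : Finset ℕ) (hS : S.Nonempty)
    (hpos : ∀ j ∈ S, 0 ≤ τ j) (T : Finset ℕ) (hT : T ⊆ S) :
    τ (S.max' hS) - ∑ j ∈ S.erase (S.max' hS), τ j ≤
      |(∑ j ∈ S \ T, τ j) - ∑ j ∈ T, τ j| := by
  set m := S.max' hS with hm
  have hmS : m ∈ S := S.max'_mem hS
  have hsub : ∀ U : Finset ℕ, U ⊆ S.erase m → ∑ j ∈ U, τ j ≤ ∑ j ∈ S.erase m, τ j := by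
    intro U hU
    exact Finset.sum_le_sum_of_subset_of_nonneg hU
      (fun i hi _ => hpos i (Finset.mem_of_mem_erase hi))
  have hnn : ∀ U : Finset ℕ, U ⊆ S.erase m → 0 ≤ ∑ j ∈ U, τ j := by
    intro U hU
    exact Finset.sum_nonneg fun i hi => hpos i (Finset.mem_of_mem_erase (hU hi))
  by_cases hmT : m ∈ T
  · -- ∑_T = τ m + ∑_{T.erase m}, S\T ⊆ erase m
    have hsplit : ∑ j ∈ T, τ j = τ m + ∑ j ∈ T.erase m, τ j :=
      (Finset.add_sum_erase T τ hmT).symm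
    have h1 : S \ T ⊆ S.erase m := by
      intro j hj
      simp only [Finset.mem_sdiff] at hj
      exact Finset.mem_erase.2 ⟨fun h => hj.2 (h ▸ hmT), hj.1⟩
    have h2 : T.erase m ⊆ S.erase m := Finset.erase_subset_erase m hT
    have hA := hsub _ h1
    have hB := hnn _ h2
    rw [hsplit]
    rw [le_abs]
    right
    linarith
  · have hmS' : m ∈ S \ T := Finset.mem_sdiff.2 ⟨hmS, hmT⟩
    have hsplit : ∑ j ∈ S \ T, τ j = τ m + ∑ j ∈ (S \ T).erase m, τ j :=
      (Finset.add_sum_erase _ τ hmS').symm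
    have h1 : T ⊆ S.erase m := by
      intro j hj
      exact Finset.mem_erase.2 ⟨fun h => hmT (h ▸ hj), hT hj⟩
    have hA := hsub _ h1
    have hB := hnn ((S \ T).erase m) (Finset.erase_subset_erase m (Finset.sdiff_subset (s := S) (t := T)))
    rw [hsplit, le_abs]
    left
    linarith
end Auxiliary

open Finset in
theorem stmt_13 (lam : ℝ) (hlam : 2 < lam)
    (τ : ℕ → ℝ) (hτ1 : 1 ≤ τ 1) (hτ : ∀ k, 1 ≤ k → lam * τ k < τ (k + 1))
    (S : Finset ℕ) (hS : S.Nonempty) (hS1 : ∀ j ∈ S, 1 ≤ j) :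
    |∫ x in Set.Ico (0 : ℝ) 1, ∏ j ∈ S, Real.sin (2 * π * τ j * x)| ≤
      (lam - 1) / (π * (lam - 2) * τ (S.max' hS)) := by
  have tau_pos := tau_pos lam hlam τ hτ1 hτ
  have sum_erase_le := sum_erase_le lam hlam τ hτ1 hτ S hS hS1
  have freq_bound := fun T hT => freq_bound τ S hS
    (fun j hj => by linarith [tau_pos j (hS1 j hj)]) T hT
  have sin_prod_expand := fun (θ : ℕ → ℝ) (x : ℝ) => sin_prod_expand θ S x
  open Complex in
  classical
  set m := S.max' hS with hm
  have hm1 : 1 ≤ m := hS1 _ (S.max'_mem hS)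
  have hτm : 1 ≤ τ m := tau_pos m hm1
  have hπ : (0:ℝ) < π := pi_pos
  have hτnn : ∀ j ∈ S, 0 ≤ τ j := fun j hj => by linarith [tau_pos j (hS1 j hj)]
  set ν := S.card with hν
  set δ : ℝ := τ m - τ m / (lam - 1) with hδdef
  have hδpos : 0 < δ := by
    have h1 : τ m / (lam - 1) < τ m := div_lt_self (by linarith) (by linarith)
    simp only [hδdef]; linarith
  set c : Finset ℕ → ℝ :=
      fun T => (∑ j ∈ S \ T, 2 * π * τ j) - ∑ j ∈ T, 2 * π * τ j with hcdef
  have hc : ∀ T ⊆ S, 2 * π * δ ≤ |c T| := by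
    intro T hT
    have h := freq_bound T hT
    have hceq : c T = 2 * π * ((∑ j ∈ S \ T, τ j) - ∑ j ∈ T, τ j) := by
      simp only [hcdef, mul_sub, Finset.mul_sum]
    rw [hceq, abs_mul, abs_of_pos (by positivity : (0:ℝ) < 2*π)]
    have : δ ≤ τ m - ∑ j ∈ S.erase m, τ j := by simp only [hδdef]; linarith [sum_erase_le]
    nlinarith [abs_nonneg ((∑ j ∈ S \ T, τ j) - ∑ j ∈ T, τ j)]
  have hcne : ∀ T ⊆ S, c T ≠ 0 := by
    intro T hT h0
    have := hc T hT
    rw [h0, abs_zero] at this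
    nlinarith
  -- reduce to interval integral
  have hIco : ∫ x in Set.Ico (0:ℝ) 1, ∏ j ∈ S, Real.sin (2*π*τ j*x)
      = ∫ x in (0:ℝ)..1, ∏ j ∈ S, Real.sin (2*π*τ j*x) := by
    rw [intervalIntegral.integral_of_le zero_le_one, integral_Ico_eq_integral_Ioo,
      integral_Ioc_eq_integral_Ioo]
  rw [hIco]
  have habs : |∫ x in (0:ℝ)..1, ∏ j ∈ S, Real.sin (2*π*τ j*x)|
      = ‖(∫ x in (0:ℝ)..1, ((∏ j ∈ S, Real.sin (2*π*τ j*x) : ℝ) : ℂ))‖ := by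
    rw [intervalIntegral.integral_ofReal, Complex.norm_real, Real.norm_eq_abs]
  rw [habs]
  have hexpand : (∫ x in (0:ℝ)..1, ((∏ j ∈ S, Real.sin (2*π*τ j*x) : ℝ) : ℂ))
      = (Complex.I/2)^ν * ∑ T ∈ S.powerset,
          ∫ x in (0:ℝ)..1, (-1:ℂ)^(S\T).card * Complex.exp ((c T : ℂ) * Complex.I * x) := by
    have : (fun x : ℝ => ((∏ j ∈ S, Real.sin (2*π*τ j*x) : ℝ) : ℂ))
        = fun x : ℝ => (Complex.I/2)^ν * ∑ T ∈ S.powerset,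
            (-1:ℂ)^(S\T).card * Complex.exp ((c T : ℂ) * Complex.I * x) := by
      funext x
      exact sin_prod_expand (fun j => 2*π*τ j) x
    rw [this, intervalIntegral.integral_const_mul,
      intervalIntegral.integral_finset_sum]
    intro T hT
    apply Continuous.intervalIntegrable
    fun_prop
  rw [hexpand, norm_mul, norm_pow, norm_div, Complex.norm_I, Complex.norm_two]
  have hterm : ∀ T ∈ S.powerset,
      ‖(∫ x in (0:ℝ)..1, (-1:ℂ)^(S\T).card *
        Complex.exp ((c T : ℂ) * Complex.I * x))‖ ≤ 2 / (2*π*δ) := by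
    intro T hT
    have hTsub : T ⊆ S := Finset.mem_powerset.1 hT
    rw [intervalIntegral.integral_const_mul, norm_mul, norm_pow, norm_neg, norm_one,
      one_pow, one_mul]
    have hcc : ((c T : ℂ)) * Complex.I ≠ 0 :=
      mul_ne_zero (Complex.ofReal_ne_zero.2 (hcne T hTsub)) Complex.I_ne_zero
    rw [integral_exp_mul_complex hcc]
    rw [norm_div, norm_mul, Complex.norm_I, mul_one, Complex.norm_real, Real.norm_eq_abs]
    have hnum : ‖(Complex.exp ((c T : ℂ) * Complex.I * 1)
        - Complex.exp ((c T : ℂ) * Complex.I * 0))‖ ≤ 2 := by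
      rw [mul_one, mul_zero, Complex.exp_zero]
      have h := norm_sub_le (Complex.exp ((c T : ℂ) * Complex.I)) 1
      rw [Complex.norm_exp_ofReal_mul_I, norm_one] at h
      linarith
    have hden := hc T hTsub
    have h2πδ : (0:ℝ) < 2*π*δ := by positivity
    exact div_le_div₀ (by norm_num) hnum h2πδ hden
  calc (1/2)^ν * ‖(∑ T ∈ S.powerset,
        ∫ x in (0:ℝ)..1, (-1:ℂ)^(S\T).card * Complex.exp ((c T : ℂ) * Complex.I * x))‖
      ≤ (1/2)^ν * ∑ T ∈ S.powerset, ‖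
          (∫ x in (0:ℝ)..1, (-1:ℂ)^(S\T).card * Complex.exp ((c T : ℂ) * Complex.I * x))‖ := by
        apply mul_le_mul_of_nonneg_left (norm_sum_le _ _) (by positivity)
    _ ≤ (1/2)^ν * (2^ν * (2 / (2*π*δ))) := by
        apply mul_le_mul_of_nonneg_left _ (by positivity)
        calc ∑ T ∈ S.powerset, ‖
              (∫ x in (0:ℝ)..1, (-1:ℂ)^(S\T).card * Complex.exp ((c T : ℂ) * Complex.I * x))‖
            ≤ S.powerset.card • (2 / (2*π*δ)) :=
              Finset.sum_le_card_nsmul _ _ _ hterm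
          _ = 2^ν * (2 / (2*π*δ)) := by
              rw [Finset.card_powerset, nsmul_eq_mul]
              push_cast
              ring
    _ = 2 / (2*π*δ) := by
        rw [← mul_assoc, ← mul_pow]
        norm_num
    _ = (lam - 1) / (π * (lam - 2) * τ m) := by
        have h1 : lam - 1 ≠ 0 := ne_of_gt (by linarith)
        have h2 : lam - 2 ≠ 0 := ne_of_gt (by linarith)
        have h3 : τ m ≠ 0 := ne_of_gt (by linarith)
        have h4 : π ≠ 0 := ne_of_gt hπ
        have hδeq : δ = τ m * (lam - 2) / (lam - 1) := by
          rw [hδdef]; field_simp; ring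
        rw [hδeq]
        have hd1 : (0:ℝ) < 2 * π * (τ m * (lam - 2) / (lam - 1)) :=
          mul_pos (by positivity)
            (div_pos (mul_pos (by linarith) (by linarith)) (by linarith))
        have hd2 : (0:ℝ) < π * (lam - 2) * τ m :=
          mul_pos (mul_pos hπ (by linarith)) (by linarith)
        rw [div_eq_div_iff (ne_of_gt hd1) (ne_of_gt hd2)]
        field_simp
end
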